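/- arXiv:1001.0448 — 3 statements merged into one kernel-verified Lean document; each statement's English description precedes it below -/
import Mathlib

section
/- Let k be a quasi-complete totally ordered rational tropical semifield and M a straight pre-reflexive k-module. Then every extremal element of M has a dual element in M∨. -/
/-! # Tropical semifields and tropical modules -/

/-- A tropical semifield: a commutative semiring with idempotent addition
(`⊕` is `+`, `⊙` is `*`, the zero element `−∞` is `0`, the unity is `1`)
in which every nonzero element has a multiplicative inverse. -/
class TropSemifield (k : Type*) extends CommSemiring k where
  add_idem : ∀ a : k, a + a = a
  exists_inv : ∀ a : k, a ≠ 0 → ∃ b : k, a * b = 1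

/-- A tropical semigroup: commutative idempotent monoid, written additively
(the zero element is `−∞`). -/
class TropSemigroup (M : Type*) extends AddCommMonoid M where
  add_idem : ∀ v : M, v + v = v

/-- A module over a tropical semifield. -/
class TropModule (k : Type*) (M : Type*) [TropSemifield k] [TropSemigroup M] extends
    SMul k M where
  mul_smul : ∀ (a b : k) (v : M), (a * b) • v = a • b • v
  one_smul : ∀ v : M, (1 : k) • v = v
  add_smul : ∀ (a b : k) (v : M), (a + b) • v = a • v + b • v
  smul_add : ∀ (a : k) (v w : M), a • (v + w) = a • v + a • w
  zero_smul : ∀ v : M, (0 : k) • v = 0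
  smul_zero : ∀ a : k, a • (0 : M) = 0

/-- The canonical partial order `v ≤ w ↔ v ⊕ w = w`. -/
def tle {M : Type*} [Add M] (v w : M) : Prop := v + w = w

/-- Strict version of the canonical order. -/
def tlt {M : Type*} [Add M] (v w : M) : Prop := tle v w ∧ v ≠ w

/-- The canonical order of `k` is total. -/
def TotallyOrderedTSF (k : Type*) [TropSemifield k] : Prop :=
  ∀ a b : k, tle a b ∨ tle b a

/-- Every nonempty subset of `k` admits an infimum. -/
def QuasiCompleteTSF (k : Type*) [TropSemifield k] : Prop :=
  ∀ S : Set k, S.Nonempty →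
    ∃ c : k, (∀ x ∈ S, tle c x) ∧ ∀ d : k, (∀ x ∈ S, tle d x) → tle d c

/-- `k` is rational: `m`-th roots exist and `k` has no maximum element. -/
def RationalTSF (k : Type*) [TropSemifield k] : Prop :=
  (∀ (a : k) (m : ℕ), m ≠ 0 → ∃ b : k, b ^ m = a) ∧ ∀ a : k, ∃ b : k, tlt a b

instance (priority := 100) TropSemifield.toTropSemigroup (k : Type*) [TropSemifield k] :
    TropSemigroup k :=
  { (inferInstance : AddCommMonoid k) with add_idem := TropSemifield.add_idem }

instance TropModule.self (k : Type*) [TropSemifield k] : TropModule k k :=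
  { (inferInstance : SMul k k) with
    mul_smul := fun a b v => mul_assoc a b v
    one_smul := fun v => one_mul v
    add_smul := fun a b v => add_mul a b v
    smul_add := fun a v w => mul_add a v w
    zero_smul := fun v => zero_mul v
    smul_zero := fun a => mul_zero a }

instance TropSemigroup.pi {ι : Type*} (M : Type*) [TropSemigroup M] :
    TropSemigroup (ι → M) :=
  { Pi.addCommMonoid with add_idem := fun v => funext fun i => TropSemigroup.add_idem (v i) }

instance TropModule.pi (k : Type*) {ι : Type*} (M : Type*) [TropSemifield k] [TropSemigroup M]
    [TropModule k M] : TropModule k (ι → M) where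
  smul a v := fun i => a • v i
  mul_smul a b v := funext fun i => TropModule.mul_smul a b (v i)
  one_smul v := funext fun i => TropModule.one_smul (v i)
  add_smul a b v := funext fun i => TropModule.add_smul a b (v i)
  smul_add a v w := funext fun i => TropModule.smul_add a (v i) (w i)
  zero_smul v := funext fun i => TropModule.zero_smul (v i)
  smul_zero a := funext fun i => TropModule.smul_zero (a := a)

/-! ## Homomorphisms of tropical modules -/

/-- A homomorphism of `k`-modules. -/
structure TropHom (k : Type*) (M : Type*) (N : Type*) [TropSemifield k] [TropSemigroup M]
    [TropModule k M] [TropSemigroup N] [TropModule k N] where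
  toFun : M → N
  map_zero' : toFun 0 = 0
  map_add' : ∀ v w : M, toFun (v + w) = toFun v + toFun w
  map_smul' : ∀ (a : k) (v : M), toFun (a • v) = a • toFun v

namespace TropHom

variable {k M N : Type*} [TropSemifield k] [TropSemigroup M] [TropModule k M]
  [TropSemigroup N] [TropModule k N]

theorem ext' {f g : TropHom k M N} (h : ∀ v, f.toFun v = g.toFun v) : f = g := by
  cases f; cases g
  simp only [mk.injEq]
  exact funext h

instance : Zero (TropHom k M N) :=
  ⟨⟨fun _ => 0, rfl, fun _ _ => (add_zero (0 : N)).symm,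
    fun a _ => (TropModule.smul_zero (M := N) a).symm⟩⟩

instance : Add (TropHom k M N) :=
  ⟨fun f g =>
    { toFun := fun v => f.toFun v + g.toFun v
      map_zero' := by
        show f.toFun 0 + g.toFun 0 = 0
        rw [f.map_zero', g.map_zero', add_zero]
      map_add' := fun v w => by
        show f.toFun (v + w) + g.toFun (v + w) =
          (f.toFun v + g.toFun v) + (f.toFun w + g.toFun w)
        rw [f.map_add', g.map_add', add_add_add_comm]
      map_smul' := fun a v => by
        show f.toFun (a • v) + g.toFun (a • v) = a • (f.toFun v + g.toFun v)
        rw [f.map_smul', g.map_smul', TropModule.smul_add] }⟩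

instance : SMul k (TropHom k M N) :=
  ⟨fun a f =>
    { toFun := fun v => a • f.toFun v
      map_zero' := by
        show a • f.toFun 0 = 0
        rw [f.map_zero', TropModule.smul_zero]
      map_add' := fun v w => by
        show a • f.toFun (v + w) = a • f.toFun v + a • f.toFun w
        rw [f.map_add', TropModule.smul_add]
      map_smul' := fun b v => by
        show a • f.toFun (b • v) = b • (a • f.toFun v)
        rw [f.map_smul', ← TropModule.mul_smul, ← TropModule.mul_smul, mul_comm a b] }⟩

instance : TropSemigroup (TropHom k M N) where
  add := (· + ·)
  zero := 0
  add_assoc f g h := ext' fun v => add_assoc (f.toFun v) (g.toFun v) (h.toFun v)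
  zero_add f := ext' fun v => zero_add (f.toFun v)
  add_zero f := ext' fun v => add_zero (f.toFun v)
  add_comm f g := ext' fun v => add_comm (f.toFun v) (g.toFun v)
  nsmul := nsmulRec
  add_idem f := ext' fun v => TropSemigroup.add_idem (f.toFun v)

instance : TropModule k (TropHom k M N) where
  smul := (· • ·)
  mul_smul a b f := ext' fun v => TropModule.mul_smul a b (f.toFun v)
  one_smul f := ext' fun v => TropModule.one_smul (f.toFun v)
  add_smul a b f := ext' fun v => TropModule.add_smul a b (f.toFun v)
  smul_add a f g := ext' fun v => TropModule.smul_add a (f.toFun v) (g.toFun v)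
  zero_smul f := ext' fun v => TropModule.zero_smul (f.toFun v)
  smul_zero a := ext' fun v => TropModule.smul_zero (M := N) a

end TropHom

/-- The canonical map `M → (M∨)∨`, `v ↦ (ξ ↦ ⟨v, ξ⟩)`. -/
def iotaFun (k : Type*) (M : Type*) [TropSemifield k] [TropSemigroup M] [TropModule k M] :
    M → TropHom k (TropHom k M k) k :=
  fun v => ⟨fun ξ => ξ.toFun v, rfl, fun ξ η => rfl, fun a ξ => rfl⟩

/-! ## Order-theoretic notions -/

/-- `z` is the infimum of `v` and `w` w.r.t. the canonical order. -/
def IsTInf {M : Type*} [Add M] (v w z : M) : Prop :=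
  tle z v ∧ tle z w ∧ ∀ y : M, tle y v → tle y w → tle y z

/-- A tropical module is straight if it is a finitely distributive ordered lattice. -/
def Straight (M : Type*) [Add M] : Prop :=
  (∀ v w : M, ∃ z : M, IsTInf v w z) ∧
    ∀ v₁ v₂ w z₁ z₂ : M, IsTInf v₁ w z₁ → IsTInf v₂ w z₂ → IsTInf (v₁ + v₂) w (z₁ + z₂)

/-- Infimum of `v` and `w` within the subset `N`. -/
def IsTInfOn {M : Type*} [Add M] (N : Set M) (v w z : M) : Prop :=
  tle z v ∧ tle z w ∧ ∀ y ∈ N, tle y v → tle y w → tle y z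

/-- A submodule (viewed as a subset) is straight. -/
def StraightSet {M : Type*} [Add M] (N : Set M) : Prop :=
  (∀ v ∈ N, ∀ w ∈ N, ∃ z ∈ N, IsTInfOn N v w z) ∧
    ∀ v₁ ∈ N, ∀ v₂ ∈ N, ∀ w ∈ N, ∀ z₁ ∈ N, ∀ z₂ ∈ N,
      IsTInfOn N v₁ w z₁ → IsTInfOn N v₂ w z₂ → IsTInfOn N (v₁ + v₂) w (z₁ + z₂)

/-! ## Generation, bases, extremal elements -/

/-- `S` generates the `k`-module `M`. -/
def TGenerates (k : Type*) {M : Type*} [TropSemifield k] [TropSemigroup M] [TropModule k M]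
    (S : Set M) : Prop :=
  ∀ v : M, ∃ (r : ℕ) (a : Fin r → k) (x : Fin r → M), (∀ i, x i ∈ S) ∧ v = ∑ i, a i • x i

/-- `M` is finitely generated. -/
def TFG (k : Type*) (M : Type*) [TropSemifield k] [TropSemigroup M] [TropModule k M] : Prop :=
  ∃ S : Finset M, TGenerates k (↑S : Set M)

/-- A basis: a generating set no proper subset of which generates. -/
def TBasis (k : Type*) {M : Type*} [TropSemifield k] [TropSemigroup M] [TropModule k M]
    (S : Set M) : Prop :=
  TGenerates k S ∧ ∀ T : Set M, T ⊂ S → ¬ TGenerates k T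

/-- `S` generates the subset `N` (viewed as a submodule of `M`). -/
def TGeneratesOn (k : Type*) {M : Type*} [TropSemifield k] [TropSemigroup M] [TropModule k M]
    (N S : Set M) : Prop :=
  ∀ v ∈ N, ∃ (r : ℕ) (a : Fin r → k) (x : Fin r → M), (∀ i, x i ∈ S) ∧ v = ∑ i, a i • x i

/-- A basis of the submodule `N ⊆ M`. -/
def TBasisOn (k : Type*) {M : Type*} [TropSemifield k] [TropSemigroup M] [TropModule k M]
    (N S : Set M) : Prop :=
  S ⊆ N ∧ TGeneratesOn k N S ∧ ∀ T : Set M, T ⊂ S → ¬ TGeneratesOn k N T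

/-- An extremal element. -/
def TExtremal {M : Type*} [Add M] [Zero M] (e : M) : Prop :=
  e ≠ 0 ∧ ∀ v w : M, v + w = e → v = e ∨ w = e

/-- The ray `k ⊙ e` generated by an element. -/
def tray (k : Type*) {M : Type*} [TropSemifield k] [TropSemigroup M] [TropModule k M]
    (e : M) : Set M :=
  Set.range fun a : k => a • e

/-- The set of extremal rays of `M`. -/
def extRays (k : Type*) (M : Type*) [TropSemifield k] [TropSemigroup M] [TropModule k M] :
    Set (Set M) :=
  {R : Set M | ∃ e : M, TExtremal e ∧ R = tray k e}

/-- The dimension of a straight reflexive module: the number of extremal rays. -/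
noncomputable def tdim (k : Type*) (M : Type*) [TropSemifield k] [TropSemigroup M]
    [TropModule k M] : ℕ :=
  (extRays k M).ncard

/-! ## Further notions on homomorphisms -/

/-- A lightly surjective homomorphism. -/
def LightlySurjective {k M N : Type*} [TropSemifield k] [TropSemigroup M] [TropModule k M]
    [TropSemigroup N] [TropModule k N] (α : TropHom k M N) : Prop :=
  ∀ w : N, ∃ v : M, tle w (α.toFun v)

/-- A lattice-preserving homomorphism. -/
def LatticePreserving {k M N : Type*} [TropSemifield k] [TropSemigroup M] [TropModule k M]
    [TropSemigroup N] [TropModule k N] (α : TropHom k M N) : Prop :=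
  ∀ v w : M, ∀ x : N, tle x (α.toFun v) → tle x (α.toFun w) →
    ∃ y : M, tle y v ∧ tle y w ∧ tle x (α.toFun y)

/-- The inclusion of the subset `N` into the ambient module is lattice-preserving. -/
def LatPresSet {M : Type*} [Add M] (N : Set M) : Prop :=
  ∀ v ∈ N, ∀ w ∈ N, ∀ x : M, tle x v → tle x w → ∃ y ∈ N, tle y v ∧ tle y w ∧ tle x y

/-- `η` is the dual element of `e`: `⟨e,η⟩ = 0` and
`⟨v,η⟩ ⊙ ⟨e,ξ⟩ ≤ ⟨v,ξ⟩` for all `v`, `ξ`. -/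
def IsDualElement {k M : Type*} [TropSemifield k] [TropSemigroup M] [TropModule k M]
    (e : M) (η : TropHom k M k) : Prop :=
  η.toFun e = 1 ∧ ∀ (v : M) (ξ : TropHom k M k), tle (η.toFun v * ξ.toFun e) (ξ.toFun v)

/-! ## Locators -/

/-- A locator of `M`: a lower-saturated subsemigroup of `(M, ⊕)` that generates `M`. -/
structure IsLocator (k : Type*) {M : Type*} [TropSemifield k] [TropSemigroup M] [TropModule k M]
    (S : Set M) : Prop where
  lower : ∀ v w : M, tle v w → w ∈ S → v ∈ S
  add_mem : ∀ v ∈ S, ∀ w ∈ S, v + w ∈ S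
  generates : TGenerates k S

/-- The multiplicative inverse `⊘a` (junk value `−∞` at `−∞`). -/
noncomputable def tinv {k : Type*} [TropSemifield k] (a : k) : k := by
  classical exact if h : a = 0 then 0 else Classical.choose (TropSemifield.exists_inv a h)

/-- Scalar multiplication on locators: `a ⊙̌ S = (⊘a) ⊙ S` for `a ≠ −∞`, `(−∞) ⊙̌ S = M`. -/
noncomputable def locSMul {k M : Type*} [TropSemifield k] [TropSemigroup M] [TropModule k M]
    (a : k) (S : Set M) : Set M := by
  classical exact if a = 0 then Set.univ else (fun v => tinv a • v) '' S

/-- `U` is the infimum of the locators `S`, `T` in `Loc(M)` (whose canonical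
order is reverse inclusion, the sum being intersection). -/
def IsLocInf (k : Type*) {M : Type*} [TropSemifield k] [TropSemigroup M] [TropModule k M]
    (S T U : Set M) : Prop :=
  IsLocator k U ∧ S ⊆ U ∧ T ⊆ U ∧
    ∀ W : Set M, IsLocator k W → S ⊆ W → T ⊆ W → U ⊆ W

/-! ## Submodules -/

/-- A subset of a `k`-module which is a submodule. -/
structure IsTSubmodule (k : Type*) {M : Type*} [TropSemifield k] [TropSemigroup M]
    [TropModule k M] (N : Set M) : Prop where
  zero_mem : (0 : M) ∈ N
  add_mem : ∀ v ∈ N, ∀ w ∈ N, v + w ∈ N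
  smul_mem : ∀ (a : k), ∀ v ∈ N, a • v ∈ N

/-- A bundled submodule of a `k`-module. -/
structure TSub (k : Type*) (M : Type*) [TropSemifield k] [TropSemigroup M] [TropModule k M] where
  carrier : Set M
  zero_mem : (0 : M) ∈ carrier
  add_mem : ∀ v ∈ carrier, ∀ w ∈ carrier, v + w ∈ carrier
  smul_mem : ∀ (a : k), ∀ v ∈ carrier, a • v ∈ carrier

instance TSub.instZero {k M : Type*} [TropSemifield k] [TropSemigroup M] [TropModule k M]
    (N : TSub k M) : Zero ↥N.carrier :=
  ⟨⟨0, N.zero_mem⟩⟩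

instance TSub.instAdd {k M : Type*} [TropSemifield k] [TropSemigroup M] [TropModule k M]
    (N : TSub k M) : Add ↥N.carrier :=
  ⟨fun v w => ⟨v.1 + w.1, N.add_mem v.1 v.2 w.1 w.2⟩⟩

instance TSub.instSMul {k M : Type*} [TropSemifield k] [TropSemigroup M] [TropModule k M]
    (N : TSub k M) : SMul k ↥N.carrier :=
  ⟨fun a v => ⟨a • v.1, N.smul_mem a v.1 v.2⟩⟩

instance TSub.semigroup {k M : Type*} [TropSemifield k] [TropSemigroup M] [TropModule k M]
    (N : TSub k M) : TropSemigroup ↥N.carrier where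
  add := (· + ·)
  zero := 0
  add_assoc a b c := Subtype.ext (add_assoc a.1 b.1 c.1)
  zero_add a := Subtype.ext (zero_add a.1)
  add_zero a := Subtype.ext (add_zero a.1)
  add_comm a b := Subtype.ext (add_comm a.1 b.1)
  nsmul := nsmulRec
  add_idem a := Subtype.ext (TropSemigroup.add_idem a.1)

instance TSub.module {k M : Type*} [TropSemifield k] [TropSemigroup M] [TropModule k M]
    (N : TSub k M) : TropModule k ↥N.carrier where
  smul := (· • ·)
  mul_smul a b v := Subtype.ext (TropModule.mul_smul a b v.1)
  one_smul v := Subtype.ext (TropModule.one_smul v.1)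
  add_smul a b v := Subtype.ext (TropModule.add_smul a b v.1)
  smul_add a v w := Subtype.ext (TropModule.smul_add a v.1 w.1)
  zero_smul v := Subtype.ext (TropModule.zero_smul v.1)
  smul_zero a := Subtype.ext (TropModule.smul_zero (M := M) a)

/-! ## Linear combinations -/

theorem tsmul_sum {k M : Type*} [TropSemifield k] [TropSemigroup M] [TropModule k M]
    (a : k) {ι : Type*} (s : Finset ι) (f : ι → M) :
    a • (∑ i ∈ s, f i) = ∑ i ∈ s, a • f i := by
  classical
  induction s using Finset.induction_on with
  | empty => simpa using TropModule.smul_zero (M := M) a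
  | insert _ _ h ih => rw [Finset.sum_insert h, Finset.sum_insert h, TropModule.smul_add, ih]

/-- The homomorphism `kⁿ → M` sending the `i`-th standard basis element to `e i`. -/
def linComb {k M : Type*} [TropSemifield k] [TropSemigroup M] [TropModule k M] {n : ℕ}
    (e : Fin n → M) : TropHom k (Fin n → k) M where
  toFun v := ∑ i, v i • e i
  map_zero' :=
    (Finset.sum_congr rfl fun i _ => TropModule.zero_smul (e i)).trans Finset.sum_const_zero
  map_add' v w := by
    rw [← Finset.sum_add_distrib]
    exact Finset.sum_congr rfl fun i _ => TropModule.add_smul (v i) (w i) (e i)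
  map_smul' a v := by
    rw [tsmul_sum]
    exact Finset.sum_congr rfl fun i _ => TropModule.mul_smul a (v i) (e i)

/-- The homomorphism `M → kⁿ` induced by an `n`-tuple of elements of `M∨`. -/
def dualTuple {k M : Type*} [TropSemifield k] [TropSemigroup M] [TropModule k M] {n : ℕ}
    (η : Fin n → TropHom k M k) : TropHom k M (Fin n → k) where
  toFun v := fun i => (η i).toFun v
  map_zero' := funext fun i => (η i).map_zero'
  map_add' v w := funext fun i => (η i).map_add' v w
  map_smul' a v := funext fun i => (η i).map_smul' a v

/-! ## Auxiliary material for Statement 14 -/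

namespace Stmt14Aux

section Order

variable {N : Type*} [TropSemigroup N]

lemma tle_refl (a : N) : tle a a := TropSemigroup.add_idem a

lemma tle_trans {a b c : N} (h1 : tle a b) (h2 : tle b c) : tle a c := by
  unfold tle at *
  rw [← h2, ← add_assoc, h1]

lemma tle_antisymm {a b : N} (h1 : tle a b) (h2 : tle b a) : a = b := by
  calc a = b + a := h2.symm
    _ = a + b := add_comm _ _
    _ = b := h1

lemma tle_add_left (a b : N) : tle a (a + b) := by
  show a + (a + b) = a + b
  rw [← add_assoc, TropSemigroup.add_idem]

lemma tle_add_right (a b : N) : tle b (a + b) := by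
  show b + (a + b) = a + b
  rw [add_comm a b, ← add_assoc, TropSemigroup.add_idem]

lemma add_tle {a b c : N} (h1 : tle a c) (h2 : tle b c) : tle (a + b) c := by
  show a + b + c = c
  rw [add_assoc, h2, h1]

lemma add_tle_add {a b c d : N} (h1 : tle a b) (h2 : tle c d) : tle (a + c) (b + d) := by
  show a + c + (b + d) = b + d
  rw [add_add_add_comm, h1, h2]

lemma zero_tle (a : N) : tle (0 : N) a := zero_add a

lemma eq_add_of_tle {a b : N} (h : tle a b) : b = a + b := h.symm

end Order

section Semifield

variable {k : Type*} [TropSemifield k]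

lemma mul_tle_mul_right {a b : k} (h : tle a b) (c : k) : tle (a * c) (b * c) := by
  show a * c + b * c = b * c
  rw [← add_mul, h]

lemma tinv_mul_cancel {a : k} (h : a ≠ 0) : a * tinv a = 1 := by
  unfold tinv
  rw [dif_neg h]
  exact Classical.choose_spec (TropSemifield.exists_inv a h)

lemma not_tle_of_total (hto : TotallyOrderedTSF k) {a b : k} (h : ¬ tle a b) : tle b a :=
  (hto a b).resolve_left h

/-- Infimum predicate in `k`. -/
def IsGInf (S : Set k) (c : k) : Prop :=
  (∀ x ∈ S, tle c x) ∧ ∀ d : k, (∀ x ∈ S, tle d x) → tle d c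

lemma isGInf_unique {S : Set k} {c c' : k} (h : IsGInf S c) (h' : IsGInf S c') : c = c' :=
  tle_antisymm (h'.2 c h.1) (h.2 c' h'.1)

lemma isGInf_const {S : Set k} {c : k} (hmem : c ∈ S) (hall : ∀ x ∈ S, x = c) :
    IsGInf S c :=
  ⟨fun x hx => (hall x hx) ▸ tle_refl c, fun d hd => hd c hmem⟩

end Semifield

section Module

variable {k M : Type*} [TropSemifield k] [TropSemigroup M] [TropModule k M]

lemma smul_tle (a : k) {v w : M} (h : tle v w) : tle (a • v) (a • w) := by
  show a • v + a • w = a • w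
  rw [← TropModule.smul_add, h]

lemma hom_tle (ξ : TropHom k M k) {v w : M} (h : tle v w) : tle (ξ.toFun v) (ξ.toFun w) := by
  show ξ.toFun v + ξ.toFun w = ξ.toFun w
  rw [← ξ.map_add', h]

lemma k_smul_eq_mul (a b : k) :
    @HSMul.hSMul k k k (@instHSMul k k TropModule.toSMul) a b = a * b := rfl

lemma hom_smul (ξ : TropHom k M k) (a : k) (v : M) : ξ.toFun (a • v) = a * ξ.toFun v :=
  ξ.map_smul' a v

/-- A scalar multiple of a homomorphism to `k`, built by hand. -/
def scaleHom (a : k) (ξ : TropHom k M k) : TropHom k M k where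
  toFun v := a * ξ.toFun v
  map_zero' := by show a * ξ.toFun 0 = 0; rw [ξ.map_zero', mul_zero]
  map_add' v w := by
    show a * ξ.toFun (v + w) = a * ξ.toFun v + a * ξ.toFun w
    rw [ξ.map_add', mul_add]
  map_smul' b v := by
    show a * ξ.toFun (b • v) = b • (a * ξ.toFun v)
    rw [hom_smul, k_smul_eq_mul, mul_left_comm]

/-! ### The `θ` construction -/

/-- The set over which the meet-like functional `θ` is the infimum. -/
def thetaSet (ξ ζ : TropHom k M k) (u : M) : Set k :=
  {c | ∃ u₁ u₂ : M, tle u (u₁ + u₂) ∧ c = ξ.toFun u₁ + ζ.toFun u₂}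

lemma thetaSet_nonempty (ξ ζ : TropHom k M k) (u : M) : (thetaSet ξ ζ u).Nonempty :=
  ⟨ξ.toFun u + ζ.toFun 0, u, 0, by simpa [add_zero] using tle_refl u, rfl⟩

variable (hqc : QuasiCompleteTSF k)

noncomputable def thetaFun (ξ ζ : TropHom k M k) (u : M) : k :=
  (hqc (thetaSet ξ ζ u) (thetaSet_nonempty ξ ζ u)).choose

lemma thetaFun_isGInf (ξ ζ : TropHom k M k) (u : M) :
    IsGInf (thetaSet ξ ζ u) (thetaFun hqc ξ ζ u) :=
  (hqc (thetaSet ξ ζ u) (thetaSet_nonempty ξ ζ u)).choose_spec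

lemma theta_le_xi (ξ ζ : TropHom k M k) (u : M) :
    tle (thetaFun hqc ξ ζ u) (ξ.toFun u) := by
  refine (thetaFun_isGInf hqc ξ ζ u).1 _ ⟨u, 0, by simpa [add_zero] using tle_refl u, ?_⟩
  rw [ζ.map_zero', add_zero]

lemma theta_le_zeta (ξ ζ : TropHom k M k) (u : M) :
    tle (thetaFun hqc ξ ζ u) (ζ.toFun u) := by
  refine (thetaFun_isGInf hqc ξ ζ u).1 _ ⟨0, u, by simpa [zero_add] using tle_refl u, ?_⟩
  rw [ξ.map_zero', zero_add]

lemma theta_mono (ξ ζ : TropHom k M k) {u u' : M} (h : tle u u') :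
    tle (thetaFun hqc ξ ζ u) (thetaFun hqc ξ ζ u') := by
  refine (thetaFun_isGInf hqc ξ ζ u').2 _ fun x hx => ?_
  obtain ⟨u₁, u₂, hle, rfl⟩ := hx
  exact (thetaFun_isGInf hqc ξ ζ u).1 _ ⟨u₁, u₂, tle_trans h hle, rfl⟩

lemma theta_zero (ξ ζ : TropHom k M k) : thetaFun hqc ξ ζ (0 : M) = 0 := by
  apply tle_antisymm
  · have h0 : (0 : k) ∈ thetaSet ξ ζ (0 : M) := by
      refine ⟨0, 0, by simpa [add_zero] using tle_refl (0 : M), ?_⟩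
      rw [ξ.map_zero', ζ.map_zero', add_zero]
    exact (thetaFun_isGInf hqc ξ ζ 0).1 _ h0
  · exact zero_tle _

lemma theta_add (hto : TotallyOrderedTSF k) (ξ ζ : TropHom k M k) (u u' : M) :
    thetaFun hqc ξ ζ (u + u') = thetaFun hqc ξ ζ u + thetaFun hqc ξ ζ u' := by
  set t := thetaFun hqc ξ ζ (u + u') with ht
  have h1 : tle (thetaFun hqc ξ ζ u + thetaFun hqc ξ ζ u') t :=
    add_tle (theta_mono hqc ξ ζ (tle_add_left u u')) (theta_mono hqc ξ ζ (tle_add_right u u'))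
  have h2 : tle t (thetaFun hqc ξ ζ u + thetaFun hqc ξ ζ u') := by
    by_contra hcon
    have hnlbu : ¬ ∀ x ∈ thetaSet ξ ζ u, tle t x := by
      intro hlb
      exact hcon (tle_trans ((thetaFun_isGInf hqc ξ ζ u).2 t hlb) (tle_add_left _ _))
    have hnlbu' : ¬ ∀ x ∈ thetaSet ξ ζ u', tle t x := by
      intro hlb
      exact hcon (tle_trans ((thetaFun_isGInf hqc ξ ζ u').2 t hlb) (tle_add_right _ _))
    push_neg at hnlbu hnlbu'
    obtain ⟨s, hsS, hst⟩ := hnlbu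
    obtain ⟨s', hs'S, hs't⟩ := hnlbu'
    obtain ⟨a, b, hab, rfl⟩ := hsS
    obtain ⟨a', b', hab', rfl⟩ := hs'S
    have hmem : ξ.toFun (a + a') + ζ.toFun (b + b') ∈ thetaSet ξ ζ (u + u') :=
      ⟨a + a', b + b', by
        have hperm : (a + b) + (a' + b') = (a + a') + (b + b') :=
          add_add_add_comm a b a' b'
        exact hperm ▸ add_tle_add hab hab', rfl⟩
    have hsum : ξ.toFun (a + a') + ζ.toFun (b + b')
        = (ξ.toFun a + ζ.toFun b) + (ξ.toFun a' + ζ.toFun b') := by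
      rw [ξ.map_add', ζ.map_add', add_add_add_comm]
    have htles : tle t ((ξ.toFun a + ζ.toFun b) + (ξ.toFun a' + ζ.toFun b')) := by
      rw [← hsum]; exact (thetaFun_isGInf hqc ξ ζ (u + u')).1 _ hmem
    have hslet : tle (ξ.toFun a + ζ.toFun b) t := not_tle_of_total hto hst
    have hs'let : tle (ξ.toFun a' + ζ.toFun b') t := not_tle_of_total hto hs't
    have heq : (ξ.toFun a + ζ.toFun b) + (ξ.toFun a' + ζ.toFun b') = t :=
      tle_antisymm (add_tle hslet hs'let) htles
    rcases hto (ξ.toFun a + ζ.toFun b) (ξ.toFun a' + ζ.toFun b') with hc | hc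
    · have : ξ.toFun a' + ζ.toFun b' = t := by rw [← heq, hc]
      exact hs't (this ▸ tle_refl t)
    · have : ξ.toFun a + ζ.toFun b = t := by
        rw [← heq, add_comm (ξ.toFun a + ζ.toFun b) (ξ.toFun a' + ζ.toFun b'), hc]
      exact hst (this ▸ tle_refl t)
  exact tle_antisymm h2 h1

lemma theta_smul (ξ ζ : TropHom k M k) (a : k) (u : M) :
    thetaFun hqc ξ ζ (a • u) = a * thetaFun hqc ξ ζ u := by
  by_cases ha : a = 0
  · subst ha
    rw [TropModule.zero_smul, theta_zero, zero_mul]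
  · have hcancel : a * tinv a = 1 := tinv_mul_cancel ha
    have key : IsGInf (thetaSet ξ ζ (a • u)) (a * thetaFun hqc ξ ζ u) := by
      constructor
      · rintro x ⟨u₁, u₂, hle, rfl⟩
        have hmem : tinv a * (ξ.toFun u₁ + ζ.toFun u₂) ∈ thetaSet ξ ζ u := by
          refine ⟨tinv a • u₁, tinv a • u₂, ?_, ?_⟩
          · have : u = tinv a • (a • u) := by
              rw [← TropModule.mul_smul, mul_comm, hcancel, TropModule.one_smul]
            rw [this, ← TropModule.smul_add]
            exact smul_tle _ hle
          · rw [hom_smul, hom_smul, mul_add]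
        have := (thetaFun_isGInf hqc ξ ζ u).1 _ hmem
        have h2 := mul_tle_mul_right this a
        rw [mul_comm, mul_comm (tinv a * _) a, ← mul_assoc, hcancel, one_mul] at h2
        exact h2
      · intro d hd
        have hlb : ∀ s ∈ thetaSet ξ ζ u, tle (tinv a * d) s := by
          rintro s ⟨u₁, u₂, hle, rfl⟩
          have hmem : a * (ξ.toFun u₁ + ζ.toFun u₂) ∈ thetaSet ξ ζ (a • u) := by
            refine ⟨a • u₁, a • u₂, ?_, ?_⟩
            · rw [← TropModule.smul_add]
              exact smul_tle _ hle
            · rw [hom_smul, hom_smul, mul_add]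
          have h3 := hd _ hmem
          have h4 := mul_tle_mul_right h3 (tinv a)
          rw [mul_comm d (tinv a), mul_comm (a * _) (tinv a), ← mul_assoc,
            mul_comm (tinv a) a, hcancel, one_mul] at h4
          exact h4
        have h5 := (thetaFun_isGInf hqc ξ ζ u).2 _ hlb
        have h6 := mul_tle_mul_right h5 a
        rw [mul_comm (tinv a * d) a, ← mul_assoc, hcancel, one_mul,
          mul_comm (thetaFun hqc ξ ζ u) a] at h6
        exact h6
    exact isGInf_unique (thetaFun_isGInf hqc ξ ζ (a • u)) key

lemma theta_e (hstraight : Straight M) {e : M} (he : TExtremal e)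
    {ξ ζ : TropHom k M k} (hξe : ξ.toFun e = 1) (hζe : ζ.toFun e = 1) :
    thetaFun hqc ξ ζ e = 1 := by
  have hmem : (1 : k) ∈ thetaSet ξ ζ e := by
    refine ⟨e, 0, by simpa [add_zero] using tle_refl e, ?_⟩
    rw [hξe, ζ.map_zero', add_zero]
  have hlb : ∀ x ∈ thetaSet ξ ζ e, tle (1 : k) x := by
    rintro x ⟨u₁, u₂, hle, rfl⟩
    obtain ⟨z₁, hz₁⟩ := hstraight.1 u₁ e
    obtain ⟨z₂, hz₂⟩ := hstraight.1 u₂ e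
    have h3 := hstraight.2 u₁ u₂ e z₁ z₂ hz₁ hz₂
    have hez : tle e (z₁ + z₂) := h3.2.2 e hle (tle_refl e)
    have hze : tle (z₁ + z₂) e := h3.2.1
    have heq : z₁ + z₂ = e := tle_antisymm hze hez
    rcases he.2 z₁ z₂ heq with h | h
    · have heu : tle e u₁ := h ▸ hz₁.1
      have := hom_tle ξ heu
      rw [hξe] at this
      exact tle_trans this (tle_add_left _ _)
    · have heu : tle e u₂ := h ▸ hz₂.1
      have := hom_tle ζ heu
      rw [hζe] at this
      exact tle_trans this (tle_add_right _ _)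
  exact tle_antisymm ((thetaFun_isGInf hqc ξ ζ e).1 _ hmem)
    ((thetaFun_isGInf hqc ξ ζ e).2 _ hlb)

/-- The meet-like homomorphism built out of `ξ` and `ζ`. -/
noncomputable def thetaHom (hto : TotallyOrderedTSF k) (ξ ζ : TropHom k M k) :
    TropHom k M k where
  toFun := thetaFun hqc ξ ζ
  map_zero' := theta_zero hqc ξ ζ
  map_add' := theta_add hqc hto ξ ζ
  map_smul' a v := by rw [theta_smul hqc ξ ζ a v, k_smul_eq_mul]

/-! ### The `η` construction -/

/-- The set whose infimum defines the dual element. -/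
def etaSet (e v : M) : Set k :=
  {c | ∃ ξ : TropHom k M k, ξ.toFun e = 1 ∧ c = ξ.toFun v}

variable {e : M} (hne : ∀ v : M, (etaSet (k := k) e v).Nonempty)

noncomputable def etaFun (v : M) : k := (hqc (etaSet e v) (hne v)).choose

lemma etaFun_isGInf (v : M) : IsGInf (etaSet e v) (etaFun hqc hne v) :=
  (hqc (etaSet e v) (hne v)).choose_spec

lemma eta_e : etaFun hqc hne e = 1 := by
  obtain ⟨c, ξ₀, hξ₀, hc⟩ := hne e
  have h1 : (1 : k) ∈ etaSet (k := k) e e := ⟨ξ₀, hξ₀, hξ₀.symm⟩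
  have hall : ∀ x ∈ etaSet (k := k) e e, x = 1 := by
    rintro x ⟨ξ, hξ, rfl⟩; exact hξ
  exact isGInf_unique (etaFun_isGInf hqc hne e) (isGInf_const h1 hall)

lemma eta_zero : etaFun hqc hne (0 : M) = 0 := by
  obtain ⟨c, ξ₀, hξ₀, hc⟩ := hne e
  have h1 : (0 : k) ∈ etaSet (k := k) e (0 : M) := ⟨ξ₀, hξ₀, ξ₀.map_zero'.symm⟩
  have hall : ∀ x ∈ etaSet (k := k) e (0 : M), x = 0 := by
    rintro x ⟨ξ, hξ, rfl⟩; exact ξ.map_zero'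
  exact isGInf_unique (etaFun_isGInf hqc hne 0) (isGInf_const h1 hall)

lemma eta_mono {v w : M} (h : tle v w) : tle (etaFun hqc hne v) (etaFun hqc hne w) := by
  refine (etaFun_isGInf hqc hne w).2 _ fun x hx => ?_
  obtain ⟨ξ, hξ, rfl⟩ := hx
  exact tle_trans ((etaFun_isGInf hqc hne v).1 _ ⟨ξ, hξ, rfl⟩) (hom_tle ξ h)

lemma eta_smul (a : k) (v : M) : etaFun hqc hne (a • v) = a * etaFun hqc hne v := by
  by_cases ha : a = 0
  · subst ha
    rw [TropModule.zero_smul, eta_zero, zero_mul]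
  · have hcancel : a * tinv a = 1 := tinv_mul_cancel ha
    have key : IsGInf (etaSet e (a • v)) (a * etaFun hqc hne v) := by
      constructor
      · rintro x ⟨ξ, hξ, rfl⟩
        have := (etaFun_isGInf hqc hne v).1 _ ⟨ξ, hξ, rfl⟩
        have h2 := mul_tle_mul_right this a
        rw [mul_comm (etaFun hqc hne v) a, mul_comm (ξ.toFun v) a, ← hom_smul] at h2
        exact h2
      · intro d hd
        have hlb : ∀ s ∈ etaSet e v, tle (tinv a * d) s := by
          rintro s ⟨ξ, hξ, rfl⟩
          have hmem : ξ.toFun (a • v) ∈ etaSet e (a • v) := ⟨ξ, hξ, rfl⟩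
          have h3 := hd _ hmem
          have h4 := mul_tle_mul_right h3 (tinv a)
          rw [mul_comm d (tinv a), hom_smul, mul_comm (a * _) (tinv a), ← mul_assoc,
            mul_comm (tinv a) a, hcancel, one_mul] at h4
          exact h4
        have h5 := (etaFun_isGInf hqc hne v).2 _ hlb
        have h6 := mul_tle_mul_right h5 a
        rw [mul_comm (tinv a * d) a, ← mul_assoc, hcancel, one_mul,
          mul_comm (etaFun hqc hne v) a] at h6
        exact h6
    exact isGInf_unique (etaFun_isGInf hqc hne (a • v)) key

lemma eta_add (hto : TotallyOrderedTSF k) (hstraight : Straight M) (he : TExtremal e)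
    (v w : M) :
    etaFun hqc hne (v + w) = etaFun hqc hne v + etaFun hqc hne w := by
  set t := etaFun hqc hne (v + w) with ht
  have h1 : tle (etaFun hqc hne v + etaFun hqc hne w) t :=
    add_tle (eta_mono hqc hne (tle_add_left v w)) (eta_mono hqc hne (tle_add_right v w))
  have h2 : tle t (etaFun hqc hne v + etaFun hqc hne w) := by
    by_contra hcon
    have hnlbv : ¬ ∀ x ∈ etaSet e v, tle t x := by
      intro hlb
      exact hcon (tle_trans ((etaFun_isGInf hqc hne v).2 t hlb) (tle_add_left _ _))
    have hnlbw : ¬ ∀ x ∈ etaSet e w, tle t x := by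
      intro hlb
      exact hcon (tle_trans ((etaFun_isGInf hqc hne w).2 t hlb) (tle_add_right _ _))
    push_neg at hnlbv hnlbw
    obtain ⟨x, hxS, hxt⟩ := hnlbv
    obtain ⟨y, hyS, hyt⟩ := hnlbw
    obtain ⟨ξ, hξe, rfl⟩ := hxS
    obtain ⟨ζ, hζe, rfl⟩ := hyS
    have hθe : thetaFun hqc ξ ζ e = 1 := theta_e hqc hstraight he hξe hζe
    have hmem : thetaFun hqc ξ ζ (v + w) ∈ etaSet e (v + w) :=
      ⟨thetaHom hqc hto ξ ζ, hθe, rfl⟩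
    have htle : tle t (thetaFun hqc ξ ζ (v + w)) :=
      (etaFun_isGInf hqc hne (v + w)).1 _ hmem
    have hθle : tle (thetaFun hqc ξ ζ (v + w)) (ξ.toFun v + ζ.toFun w) := by
      rw [theta_add hqc hto ξ ζ v w]
      exact add_tle_add (theta_le_xi hqc ξ ζ v) (theta_le_zeta hqc ξ ζ w)
    have hxlet : tle (ξ.toFun v) t := not_tle_of_total hto hxt
    have hylet : tle (ζ.toFun w) t := not_tle_of_total hto hyt
    have heq : ξ.toFun v + ζ.toFun w = t :=
      tle_antisymm (add_tle hxlet hylet) (tle_trans htle hθle)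
    rcases hto (ξ.toFun v) (ζ.toFun w) with hc | hc
    · have : ζ.toFun w = t := by rw [← heq, hc]
      exact hyt (this ▸ tle_refl t)
    · have : ξ.toFun v = t := by
        rw [← heq, add_comm (ξ.toFun v) (ζ.toFun w), hc]
      exact hxt (this ▸ tle_refl t)
  exact tle_antisymm h2 h1

end Module

end Stmt14Aux

theorem stmt14 {k M : Type*} [TropSemifield k] [TropSemigroup M] [TropModule k M]
    (hto : TotallyOrderedTSF k) (hqc : QuasiCompleteTSF k) (hrat : RationalTSF k)
    (hstraight : Straight M) (hpre : Function.Injective (iotaFun k M))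
    (e : M) (he : TExtremal e) :
    ∃ η : TropHom k M k, IsDualElement e η := by
  classical
  obtain ⟨ξ₁, hξ₁⟩ : ∃ ξ : TropHom k M k, ξ.toFun e ≠ 0 := by
    by_contra h
    push_neg at h
    have heq : iotaFun k M e = iotaFun k M 0 := TropHom.ext' fun ξ => by
      show ξ.toFun e = ξ.toFun 0
      rw [h ξ, ξ.map_zero']
    exact he.1 (hpre heq)
  have hcancel : ξ₁.toFun e * tinv (ξ₁.toFun e) = 1 := Stmt14Aux.tinv_mul_cancel hξ₁
  have hξ₀ : (Stmt14Aux.scaleHom (tinv (ξ₁.toFun e)) ξ₁).toFun e = 1 := by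
    show tinv (ξ₁.toFun e) * ξ₁.toFun e = 1
    rw [mul_comm, hcancel]
  have hne : ∀ v : M, (Stmt14Aux.etaSet (k := k) e v).Nonempty := fun v =>
    ⟨(Stmt14Aux.scaleHom (tinv (ξ₁.toFun e)) ξ₁).toFun v,
      Stmt14Aux.scaleHom (tinv (ξ₁.toFun e)) ξ₁, hξ₀, rfl⟩
  refine ⟨⟨Stmt14Aux.etaFun hqc hne, Stmt14Aux.eta_zero hqc hne,
    Stmt14Aux.eta_add hqc hne hto hstraight he,
    fun b v => by rw [Stmt14Aux.eta_smul hqc hne b v, Stmt14Aux.k_smul_eq_mul]⟩,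
    Stmt14Aux.eta_e hqc hne, ?_⟩
  intro v ξ
  by_cases hξ : ξ.toFun e = 0
  · show Stmt14Aux.etaFun hqc hne v * ξ.toFun e + ξ.toFun v = ξ.toFun v
    rw [hξ, mul_zero, zero_add]
  · have hc : ξ.toFun e * tinv (ξ.toFun e) = 1 := Stmt14Aux.tinv_mul_cancel hξ
    have hξ'e : (Stmt14Aux.scaleHom (tinv (ξ.toFun e)) ξ).toFun e = 1 := by
      show tinv (ξ.toFun e) * ξ.toFun e = 1
      rw [mul_comm, hc]
    have hmem : (Stmt14Aux.scaleHom (tinv (ξ.toFun e)) ξ).toFun v ∈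
        Stmt14Aux.etaSet (k := k) e v := ⟨_, hξ'e, rfl⟩
    have h1 := (Stmt14Aux.etaFun_isGInf hqc hne v).1 _ hmem
    have h2 := Stmt14Aux.mul_tle_mul_right h1 (ξ.toFun e)
    have h3 : (Stmt14Aux.scaleHom (tinv (ξ.toFun e)) ξ).toFun v * ξ.toFun e = ξ.toFun v := by
      show tinv (ξ.toFun e) * ξ.toFun v * ξ.toFun e = ξ.toFun v
      rw [mul_comm (tinv (ξ.toFun e)) (ξ.toFun v), mul_assoc, mul_comm (tinv (ξ.toFun e)),
        hc, mul_one]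
    rw [h3] at h2
    exact h2
end

section
/- Let k be a totally ordered tropical semifield and M a finitely generated pre-reflexive k-module with basis {e₁,…,eₙ}; let β : kⁿ → M be the surjective homomorphism sending the i-th standard basis element to e_i. Suppose that each e_i has a dual element η_i ∈ M∨. Then: (1) M is straight; (2) the homomorphism α : M → kⁿ defined by α(v) = (⟨v,η₁⟩,…,⟨v,ηₙ⟩) satisfies β ∘ α = id_M; (3) α is the unique right-inversion of β. -/
/-! ## Auxiliary lemmas -/

section Aux

variable {N : Type*} [TropSemigroup N]

theorem tle_refl' (a : N) : tle a a := TropSemigroup.add_idem a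

theorem tle_trans' {a b c : N} (h1 : tle a b) (h2 : tle b c) : tle a c := by
  unfold tle at *; rw [← h2, ← add_assoc, h1]

theorem tle_antisymm' {a b : N} (h1 : tle a b) (h2 : tle b a) : a = b := by
  unfold tle at *; rw [← h2, add_comm]; exact h1

theorem tle_add_left' (a b : N) : tle a (a + b) := by
  unfold tle; rw [← add_assoc, TropSemigroup.add_idem]

theorem tle_add_right' (a b : N) : tle b (a + b) := by
  rw [add_comm]; exact tle_add_left' b a

theorem add_tle' {a b c : N} (h1 : tle a c) (h2 : tle b c) : tle (a + b) c := by
  unfold tle at *; rw [add_assoc, h2, h1]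

theorem add_mono' {a b c d : N} (h1 : tle a b) (h2 : tle c d) : tle (a + c) (b + d) := by
  unfold tle at *; rw [add_add_add_comm, h1, h2]

theorem zero_tle' (a : N) : tle 0 a := zero_add a

theorem sum_tle' {ι : Type*} {s : Finset ι} {f : ι → N} {c : N}
    (h : ∀ i ∈ s, tle (f i) c) : tle (∑ i ∈ s, f i) c := by
  classical
  induction s using Finset.induction_on with
  | empty => simpa using zero_tle' c
  | insert _ _ hx ih =>
    rw [Finset.sum_insert hx]
    exact add_tle' (h _ (Finset.mem_insert_self _ _))
      (ih fun i hi => h i (Finset.mem_insert_of_mem hi))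

theorem tle_sum' {ι : Type*} {s : Finset ι} {f : ι → N} {j : ι} (hj : j ∈ s) :
    tle (f j) (∑ i ∈ s, f i) := by
  classical
  rw [← Finset.add_sum_erase s f hj]; exact tle_add_left' _ _

end Aux

section AuxK

variable {k M : Type*} [TropSemifield k] [TropSemigroup M] [TropModule k M]

theorem mul_mono_left' {a b : k} (c : k) (h : tle a b) : tle (c * a) (c * b) := by
  unfold tle at *; rw [← mul_add, h]

theorem smul_mono_scalar' {a b : k} (v : M) (h : tle a b) : tle (a • v) (b • v) := by
  unfold tle at *; rw [← TropModule.add_smul, h]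

theorem hom_mono' {N : Type*} [TropSemigroup N] [TropModule k N] (f : TropHom k M N)
    {v w : M} (h : tle v w) : tle (f.toFun v) (f.toFun w) := by
  unfold tle at *; rw [← f.map_add', h]

theorem hom_sum' {N : Type*} [TropSemigroup N] [TropModule k N] (f : TropHom k M N)
    {ι : Type*} (s : Finset ι) (g : ι → M) :
    f.toFun (∑ i ∈ s, g i) = ∑ i ∈ s, f.toFun (g i) := by
  classical
  induction s using Finset.induction_on with
  | empty => simpa using f.map_zero'
  | insert _ _ hx ih => rw [Finset.sum_insert hx, Finset.sum_insert hx, f.map_add', ih]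

/-- With pre-reflexivity, equality can be tested against all functionals. -/
theorem eq_of_forall_xi (hpre : Function.Injective (iotaFun k M)) {u v : M}
    (h : ∀ ξ : TropHom k M k, ξ.toFun u = ξ.toFun v) : u = v := by
  apply hpre
  exact TropHom.ext' h

theorem tle_of_forall_xi (hpre : Function.Injective (iotaFun k M)) {u v : M}
    (h : ∀ ξ : TropHom k M k, tle (ξ.toFun u) (ξ.toFun v)) : tle u v := by
  apply eq_of_forall_xi hpre
  intro ξ
  rw [ξ.map_add']
  exact h ξ

/-- In a totally ordered tropical semifield a finite sum is attained by a term
(or the index set is empty). -/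
theorem sum_attained (hto : TotallyOrderedTSF k) {ι : Type*} (s : Finset ι) (f : ι → k) :
    (∑ i ∈ s, f i) = 0 ∨ ∃ j ∈ s, (∑ i ∈ s, f i) = f j := by
  classical
  induction s using Finset.induction_on with
  | empty => left; simp
  | @insert a s hx ih =>
    rw [Finset.sum_insert hx]
    rcases ih with h0 | ⟨j, hj, hjs⟩
    · right; exact ⟨a, Finset.mem_insert_self a s, by rw [h0, add_zero]⟩
    · rcases hto (f a) (f j) with h | h
      · right
        refine ⟨j, Finset.mem_insert_of_mem hj, ?_⟩
        rw [hjs]; exact h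
      · right
        refine ⟨a, Finset.mem_insert_self a s, ?_⟩
        rw [hjs, add_comm]; exact h

/-- Minimum of two elements of `k` (meaningful when `k` is totally ordered). -/
noncomputable def tmin (a b : k) : k := by
  classical exact if tle a b then a else b

theorem tmin_le_left (hto : TotallyOrderedTSF k) (a b : k) : tle (tmin a b) a := by
  unfold tmin
  split
  · exact tle_refl' a
  · next h =>
      rcases hto a b with h' | h'
      · exact absurd h' h
      · exact h'

theorem tmin_le_right (a b : k) : tle (tmin a b) b := by
  unfold tmin
  split
  · next h => exact h
  · exact tle_refl' b

theorem tle_tmin {a b c : k} (h1 : tle c a) (h2 : tle c b) : tle c (tmin a b) := by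
  unfold tmin
  split
  · exact h1
  · exact h2

theorem tle_tmin_add (hto : TotallyOrderedTSF k) {y a₁ a₂ c : k}
    (h1 : tle y (a₁ + a₂)) (h2 : tle y c) :
    tle y (tmin a₁ c + tmin a₂ c) := by
  rcases hto a₁ a₂ with h | h
  · have hy2 : tle y a₂ := by rwa [show a₁ + a₂ = a₂ from h] at h1
    exact tle_trans' (tle_tmin hy2 h2) (tle_add_right' _ _)
  · have hy1 : tle y a₁ := by
      have : a₁ + a₂ = a₁ := by rw [add_comm]; exact h
      rwa [this] at h1
    exact tle_trans' (tle_tmin hy1 h2) (tle_add_left' _ _)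

/-- The `i`-th coordinate of a homomorphism into `kⁿ`, as a functional. -/
def coordHom {n : ℕ} (α' : TropHom k M (Fin n → k)) (i : Fin n) : TropHom k M k where
  toFun v := α'.toFun v i
  map_zero' := congrFun α'.map_zero' i
  map_add' v w := congrFun (α'.map_add' v w) i
  map_smul' a v := congrFun (α'.map_smul' a v) i

theorem tle_pi_intro {n : ℕ} {u v : Fin n → k} (h : ∀ i, tle (u i) (v i)) : tle u v :=
  funext h

theorem tle_pi_elim {n : ℕ} {u v : Fin n → k} (h : tle u v) (i : Fin n) : tle (u i) (v i) :=
  congrFun h i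

end AuxK

theorem stmt15 {k M : Type*} [TropSemifield k] [TropSemigroup M] [TropModule k M]
    (hto : TotallyOrderedTSF k) (hpre : Function.Injective (iotaFun k M))
    {n : ℕ} (e : Fin n → M) (hinj : Function.Injective e)
    (hbasis : TBasis k (Set.range e))
    (η : Fin n → TropHom k M k) (hdual : ∀ i, IsDualElement (e i) (η i)) :
    Straight M ∧ (∀ v : M, (linComb e).toFun ((dualTuple η).toFun v) = v) ∧
    ∀ α' : TropHom k M (Fin n → k), (∀ v : M, (linComb e).toFun (α'.toFun v) = v) →
      α' = dualTuple η := by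
  classical
  have ksmul : ∀ a b : k, a • b = a * b := fun a b => rfl
  have hβα : ∀ v : M, (linComb e).toFun ((dualTuple η).toFun v) = ∑ i, (η i).toFun v • e i :=
    fun v => rfl
  -- Part 2: β ∘ α = id
  have hid : ∀ v : M, (linComb e).toFun ((dualTuple η).toFun v) = v := by
    intro v
    apply tle_antisymm'
    · apply tle_of_forall_xi hpre
      intro ξ
      rw [hβα, hom_sum' ξ]
      apply sum_tle'
      intro i _
      rw [ξ.map_smul', ksmul]
      exact (hdual i).2 v ξ
    · obtain ⟨r, a, x, hx, hv⟩ := hbasis.1 v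
      choose σ hσ using hx
      have hterm : ∀ t : Fin r, tle (a t • x t) ((linComb e).toFun ((dualTuple η).toFun v)) := by
        intro t
        have h1 : tle (a t • x t) v := by
          rw [hv]; exact tle_sum' (f := fun l => a l • x l) (Finset.mem_univ t)
        have h2 : tle (a t) ((η (σ t)).toFun v) := by
          have h3 := hom_mono' (η (σ t)) h1
          rw [(η (σ t)).map_smul', ← hσ t, (hdual (σ t)).1, ksmul, mul_one] at h3
          exact h3
        have h4 : tle (a t • x t) ((η (σ t)).toFun v • e (σ t)) := by
          rw [← hσ t]
          exact smul_mono_scalar' (e (σ t)) h2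
        refine tle_trans' h4 ?_
        rw [hβα]
        exact tle_sum' (f := fun l => (η l).toFun v • e l) (Finset.mem_univ (σ t))
      nth_rewrite 1 [hv]
      exact sum_tle' fun t _ => hterm t
  -- Part 3: uniqueness of the right-inversion
  have huniq : ∀ α' : TropHom k M (Fin n → k),
      (∀ v : M, (linComb e).toFun (α'.toFun v) = v) → α' = dualTuple η := by
    intro α' hα'
    have hcoord : ∀ i : Fin n, tle 1 (α'.toFun (e i) i) := by
      intro i
      have h1 : (∑ j, α'.toFun (e i) j • e j) = e i := hα' (e i)
      have hsum : (∑ j, α'.toFun (e i) j * (η i).toFun (e j)) = 1 := by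
        calc ∑ j, α'.toFun (e i) j * (η i).toFun (e j)
            = ∑ j, (η i).toFun (α'.toFun (e i) j • e j) := by
              refine Finset.sum_congr rfl fun j _ => ?_
              rw [(η i).map_smul', ksmul]
          _ = (η i).toFun (∑ j, α'.toFun (e i) j • e j) := (hom_sum' (η i) _ _).symm
          _ = (η i).toFun (e i) := by rw [h1]
          _ = 1 := (hdual i).1
      rcases sum_attained hto Finset.univ
          (fun j => α'.toFun (e i) j * (η i).toFun (e j)) with h0 | ⟨j, _, hj⟩
      · rw [hsum] at h0
        show (1 : k) + _ = _
        rw [h0, zero_add]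
      · rw [hsum] at hj
        by_cases hji : j = i
        · rw [hji, (hdual i).1, mul_one] at hj
          rw [← hj]
          exact tle_refl' 1
        · exfalso
          have hle1 : tle (α'.toFun (e i) j • e j) (e i) := by
            have h2 : tle (α'.toFun (e i) j • e j) (∑ l, α'.toFun (e i) l • e l) :=
              tle_sum' (f := fun l => α'.toFun (e i) l • e l) (Finset.mem_univ j)
            rwa [h1] at h2
          have hle2 : tle (e i) (α'.toFun (e i) j • e j) := by
            apply tle_of_forall_xi hpre
            intro ξ
            have hd := (hdual i).2 (e j) ξ
            have h5 := mul_mono_left' (α'.toFun (e i) j) hd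
            rw [← mul_assoc, ← hj, one_mul] at h5
            rw [ξ.map_smul', ksmul]
            exact h5
          have heq : e i = α'.toFun (e i) j • e j := tle_antisymm' hle2 hle1
          have hss : Set.range e \ {e i} ⊂ Set.range e := by
            refine (Set.ssubset_iff_of_subset Set.diff_subset).mpr ?_
            exact ⟨e i, ⟨i, rfl⟩, fun h => h.2 rfl⟩
          refine hbasis.2 _ hss ?_
          intro v
          obtain ⟨r, a, x, hx, hv⟩ := hbasis.1 v
          refine ⟨r, (fun t => if x t = e i then a t * α'.toFun (e i) j else a t),
            (fun t => if x t = e i then e j else x t), ?_, ?_⟩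
          · intro t
            by_cases hxt : x t = e i
            · simp only [if_pos hxt]
              exact ⟨⟨j, rfl⟩, fun hej => hji (hinj hej)⟩
            · simp only [if_neg hxt]
              exact ⟨hx t, hxt⟩
          · rw [hv]
            refine Finset.sum_congr rfl fun t _ => ?_
            by_cases hxt : x t = e i
            · simp only [if_pos hxt]
              rw [TropModule.mul_smul, ← heq, hxt]
            · simp only [if_neg hxt]
    apply TropHom.ext'
    intro v
    funext i
    show α'.toFun v i = (η i).toFun v
    have h1 : (∑ j, α'.toFun v j • e j) = v := hα' v
    apply tle_antisymm'
    · have h2 : tle (α'.toFun v i • (η i).toFun (e i))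
          (∑ j, α'.toFun v j • (η i).toFun (e j)) :=
        tle_sum' (f := fun j => α'.toFun v j • (η i).toFun (e j)) (Finset.mem_univ i)
      have h3 : (η i).toFun v = ∑ j, α'.toFun v j • (η i).toFun (e j) := by
        conv_lhs => rw [← h1]
        rw [hom_sum' (η i)]
        exact Finset.sum_congr rfl fun j _ => (η i).map_smul' _ _
      rw [(hdual i).1, ksmul, mul_one] at h2
      rw [h3]
      exact h2
    · have hd := (hdual i).2 v (coordHom α' i)
      have hc := hcoord i
      have h6 := mul_mono_left' ((η i).toFun v) hc
      rw [mul_one] at h6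
      exact tle_trans' h6 hd
  -- Part 1: straightness
  have hstraight : Straight M := by
    have hinf : ∀ v w : M, IsTInf v w ((linComb e).toFun
        (fun j => tmin ((dualTuple η).toFun v j) ((dualTuple η).toFun w j))) := by
      intro v w
      refine ⟨?_, ?_, ?_⟩
      · have h1 : tle (fun j => tmin ((dualTuple η).toFun v j) ((dualTuple η).toFun w j))
            ((dualTuple η).toFun v) := tle_pi_intro fun j => tmin_le_left hto _ _
        have h2 := hom_mono' (linComb e) h1
        rwa [hid v] at h2
      · have h1 : tle (fun j => tmin ((dualTuple η).toFun v j) ((dualTuple η).toFun w j))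
            ((dualTuple η).toFun w) := tle_pi_intro fun j => tmin_le_right _ _
        have h2 := hom_mono' (linComb e) h1
        rwa [hid w] at h2
      · intro y hyv hyw
        have h1 : tle ((dualTuple η).toFun y)
            (fun j => tmin ((dualTuple η).toFun v j) ((dualTuple η).toFun w j)) := by
          apply tle_pi_intro
          intro j
          exact tle_tmin (tle_pi_elim (hom_mono' (dualTuple η) hyv) j)
            (tle_pi_elim (hom_mono' (dualTuple η) hyw) j)
        have h2 := hom_mono' (linComb e) h1
        rwa [hid y] at h2
    have huniq2 : ∀ v w z : M, IsTInf v w z → z = (linComb e).toFun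
        (fun j => tmin ((dualTuple η).toFun v j) ((dualTuple η).toFun w j)) := by
      intro v w z hz
      exact tle_antisymm' ((hinf v w).2.2 z hz.1 hz.2.1)
        (hz.2.2 _ (hinf v w).1 (hinf v w).2.1)
    refine ⟨fun v w => ⟨_, hinf v w⟩, ?_⟩
    intro v₁ v₂ w z₁ z₂ h₁ h₂
    rw [huniq2 _ _ _ h₁, huniq2 _ _ _ h₂]
    refine ⟨?_, ?_, ?_⟩
    · exact add_mono' (hinf v₁ w).1 (hinf v₂ w).1
    · exact add_tle' (hinf v₁ w).2.1 (hinf v₂ w).2.1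
    · intro y hyv hyw
      have h1 : tle ((dualTuple η).toFun y)
          ((fun j => tmin ((dualTuple η).toFun v₁ j) ((dualTuple η).toFun w j)) +
           (fun j => tmin ((dualTuple η).toFun v₂ j) ((dualTuple η).toFun w j))) := by
        apply tle_pi_intro
        intro j
        have hy1 : tle ((dualTuple η).toFun y j)
            ((dualTuple η).toFun v₁ j + (dualTuple η).toFun v₂ j) := by
          have h4 := tle_pi_elim (hom_mono' (dualTuple η) hyv) j
          rw [(dualTuple η).map_add'] at h4
          exact h4
        exact tle_tmin_add hto hy1 (tle_pi_elim (hom_mono' (dualTuple η) hyw) j)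
      have h2 := hom_mono' (linComb e) h1
      rw [hid y, (linComb e).map_add'] at h2
      exact h2
  exact ⟨hstraight, hid, huniq⟩
end

section
/- Let M be a submodule of ℝT^{n+1} generated by finitely many elements of ℝ^{n+1}. Then the following are equivalent: (i) M is lattice-preserving in ℝT^{n+1}, i.e. the componentwise infimum of any two elements of M belongs to M; (ii) M ∖ {−∞} is a convex subset of ℝ^{n+1} in the ordinary (real) sense. -/
/-! ## The tropical semifield of real numbers -/

/-- The tropical semifield of real numbers `ℝT = ℝ ∪ {−∞}`,
with `⊕ = max`, `⊙ = +`, zero element `−∞` and unity `0`. -/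
def RT : Type := WithBot ℝ

namespace RT

/-- Tropical addition `⊕` on `ℝT`: the maximum. -/
noncomputable def tadd (a b : RT) : RT := @max (WithBot ℝ) _ a b

/-- Tropical multiplication `⊙` on `ℝT`: ordinary addition. -/
def tmul (a b : RT) : RT := @HAdd.hAdd (WithBot ℝ) (WithBot ℝ) (WithBot ℝ) _ a b

/-- The zero element `−∞` of `ℝT`. -/
def tzero : RT := @Bot.bot (WithBot ℝ) _

/-- The unity `0` of `ℝT`. -/
def tone : RT := ((0 : ℝ) : WithBot ℝ)

noncomputable def tnsmul : ℕ → RT → RT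
  | 0, _ => tzero
  | n + 1, a => tadd (tnsmul n a) a

noncomputable def tnpow : ℕ → RT → RT
  | 0, _ => tone
  | n + 1, a => tmul (tnpow n a) a

noncomputable def tnatCast : ℕ → RT
  | 0 => tzero
  | n + 1 => tadd (tnatCast n) tone

theorem wb_zero_add (a : WithBot ℝ) : ((0 : ℝ) : WithBot ℝ) + a = a := by
  rw [WithBot.coe_zero, zero_add]

theorem wb_add_zero (a : WithBot ℝ) : a + ((0 : ℝ) : WithBot ℝ) = a := by
  rw [WithBot.coe_zero, add_zero]

theorem wb_left_distrib (a b c : WithBot ℝ) : a + max b c = max (a + b) (a + c) := by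
  have h : Monotone (fun x : WithBot ℝ => a + x) := fun x y hxy => add_le_add_right hxy _
  exact h.map_max

theorem wb_right_distrib (a b c : WithBot ℝ) : max a b + c = max (a + c) (b + c) := by
  have h : Monotone (fun x : WithBot ℝ => x + c) := fun x y hxy => add_le_add_left hxy _
  exact h.map_max

theorem wb_exists_inv (a : WithBot ℝ) (h : a ≠ ⊥) :
    ∃ b : WithBot ℝ, a + b = ((0 : ℝ) : WithBot ℝ) := by
  obtain ⟨x, rfl⟩ := WithBot.ne_bot_iff_exists.mp h
  exact ⟨((-x : ℝ) : WithBot ℝ), by rw [← WithBot.coe_add, add_neg_cancel]⟩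

noncomputable instance instTropSemifield : TropSemifield RT where
  add := tadd
  zero := tzero
  mul := tmul
  one := tone
  add_assoc a b c := @max_assoc (WithBot ℝ) _ a b c
  add_comm a b := @max_comm (WithBot ℝ) _ a b
  zero_add a := max_eq_right (@bot_le (WithBot ℝ) _ _ a)
  add_zero a := max_eq_left (@bot_le (WithBot ℝ) _ _ a)
  nsmul := tnsmul
  nsmul_zero a := rfl
  nsmul_succ n a := rfl
  mul_assoc a b c := @add_assoc (WithBot ℝ) _ a b c
  mul_comm a b := @add_comm (WithBot ℝ) _ a b
  one_mul a := wb_zero_add a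
  mul_one a := wb_add_zero a
  zero_mul a := @WithBot.bot_add ℝ _ a
  mul_zero a := @WithBot.add_bot ℝ _ a
  left_distrib := wb_left_distrib
  right_distrib := wb_right_distrib
  npow := tnpow
  npow_zero a := rfl
  npow_succ n a := rfl
  natCast := tnatCast
  natCast_zero := rfl
  natCast_succ n := rfl
  add_idem a := @max_self (WithBot ℝ) _ a
  exists_inv a h := wb_exists_inv a h

end RT

/-- The canonical inclusion `ℝ → ℝT`. -/
def rc (x : ℝ) : RT := (x : WithBot ℝ)

theorem RT.rc_mul (x y : ℝ) : rc x * rc y = rc (x + y) := (WithBot.coe_add x y).symm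

theorem RT.rc_zero : rc 0 = (1 : RT) := rfl

/-! ## Tropical projective space -/

theorem RT.cons_ne_zero {n : ℕ} (v : Fin n → ℝ) :
    (Fin.cons (rc 0) (fun i => rc (v i)) : Fin (n + 1) → RT) ≠ 0 := by
  intro h
  have h0 := congrFun h 0
  rw [Fin.cons_zero] at h0
  exact WithBot.coe_ne_bot h0

/-- Two nonzero vectors of `ℝT^{n+1}` are projectively equivalent if they differ
by the scalar action of `ℝ`. -/
def projSetoid (n : ℕ) : Setoid {v : Fin (n + 1) → RT // v ≠ 0} where
  r v w := ∃ c : ℝ, w.1 = rc c • v.1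
  iseqv := by
    constructor
    · intro v
      exact ⟨0, (TropModule.one_smul v.1).symm⟩
    · rintro v w ⟨c, hc⟩
      refine ⟨-c, ?_⟩
      rw [hc, ← TropModule.mul_smul, RT.rc_mul, neg_add_cancel, RT.rc_zero,
        TropModule.one_smul]
    · rintro u v w ⟨c, hc⟩ ⟨d, hd⟩
      refine ⟨d + c, ?_⟩
      rw [hd, hc, ← TropModule.mul_smul, RT.rc_mul]

/-- The tropical projective space `ℝT P^n`. -/
def TP (n : ℕ) : Type := Quotient (projSetoid n)

/-- The canonical projection `φ : ℝT^{n+1} ∖ {−∞} → ℝT P^n`. -/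
def tphi {n : ℕ} (v : Fin (n + 1) → RT) (h : v ≠ 0) : TP n :=
  Quotient.mk (projSetoid n) ⟨v, h⟩

/-- The subset `M = φ⁻¹(P) ∪ {−∞}` of `ℝT^{n+1}` corresponding to `P ⊆ ℝT P^n`. -/
def Mof {n : ℕ} (P : Set (TP n)) : Set (Fin (n + 1) → RT) :=
  {v | ∃ h : v ≠ 0, tphi v h ∈ P} ∪ {0}

/-- A subset of `ℝT P^n` is tropically convex if the corresponding subset of
`ℝT^{n+1}` is a submodule. -/
def TropConvexP {n : ℕ} (Q : Set (TP n)) : Prop :=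
  IsTSubmodule RT (Mof Q)

/-- The tropically convex hull. -/
def tchull {n : ℕ} (A : Set (TP n)) : Set (TP n) :=
  ⋂₀ {Q : Set (TP n) | TropConvexP Q ∧ A ⊆ Q}

/-- The embedding `ℝ^n → ℝT P^n`, `(a₁, …, aₙ) ↦ φ(0, a₁, …, aₙ)`. -/
def embR {n : ℕ} (v : Fin n → ℝ) : TP n :=
  tphi (Fin.cons (rc 0) fun i => rc (v i)) (RT.cons_ne_zero v)

/-- A (tropical) polytope in `ℝT P^n`: the tropically convex hull of finitely
many points of `ℝ^n`. -/
def IsTropPolytope {n : ℕ} (P : Set (TP n)) : Prop :=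
  ∃ S : Finset (TP n), (∀ x ∈ S, ∃ v : Fin n → ℝ, x = embR v) ∧ P = tchull ↑S

/-- A polytrope: a polytope that is convex as a subset of `ℝ^n` in the ordinary sense. -/
def IsPolytrope {n : ℕ} (P : Set (TP n)) : Prop :=
  IsTropPolytope P ∧ P ⊆ Set.range embR ∧ Convex ℝ (embR ⁻¹' P)

noncomputable section Aux

/-- identity map viewing `RT` as `WithBot ℝ`. -/
def tw (a : RT) : WithBot ℝ := a

lemma tw_add (a b : RT) : tw (a + b) = max (tw a) (tw b) := rfl
lemma tw_mul (a b : RT) : tw (a * b) = tw a + tw b := rfl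
lemma tw_zero : tw (0 : RT) = (⊥ : WithBot ℝ) := rfl
lemma tw_one : tw (1 : RT) = ((0:ℝ) : WithBot ℝ) := rfl
lemma tw_rc (x : ℝ) : tw (rc x) = (x : WithBot ℝ) := rfl
lemma tw_inj {a b : RT} (h : tw a = tw b) : a = b := h

variable {n : ℕ}

lemma pi_add_apply (v w : Fin (n+1) → RT) (j : Fin (n+1)) : (v + w) j = v j + w j := rfl
lemma pi_zero_apply (j : Fin (n+1)) : (0 : Fin (n+1) → RT) j = 0 := rfl
lemma pi_smul_apply (a : RT) (v : Fin (n+1) → RT) (j : Fin (n+1)) : (a • v) j = a * v j := rfl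

lemma sum_apply' {ι : Type*} (s : Finset ι) (f : ι → (Fin (n+1) → RT)) (j : Fin (n+1)) :
    (∑ i ∈ s, f i) j = ∑ i ∈ s, f i j := by
  classical
  induction s using Finset.cons_induction with
  | empty => rfl
  | cons a s ha ih => rw [Finset.sum_cons, Finset.sum_cons, pi_add_apply, ih]

lemma rt_sum_eq_sup {ι : Type*} (s : Finset ι) (f : ι → RT) :
    tw (∑ i ∈ s, f i) = s.sup (fun i => tw (f i)) := by
  classical
  induction s using Finset.cons_induction with
  | empty => rfl
  | cons a s ha ih => rw [Finset.sum_cons, Finset.sup_cons, tw_add, ih]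

end Aux
noncomputable section Aux2

/-- real lift of a vector (junk `0` at `⊥`). -/
def liftR {n : ℕ} (v : Fin (n+1) → RT) (j : Fin (n+1)) : ℝ := WithBot.unbotD 0 (tw (v j))

variable {n : ℕ}

lemma liftR_spec {v : Fin (n+1) → RT} {j : Fin (n+1)} (h : v j ≠ (0 : RT)) :
    tw (v j) = ((liftR v j : ℝ) : WithBot ℝ) := by
  have h' : tw (v j) ≠ (⊥ : WithBot ℝ) := h
  rcases WithBot.ne_bot_iff_exists.mp h' with ⟨x, hx⟩
  rw [liftR, ← hx, WithBot.unbotD_coe]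

lemma rt_attain {ι : Type*} (s : Finset ι) (f : ι → RT) (hne : (∑ i ∈ s, f i) ≠ (0 : RT)) :
    ∃ i ∈ s, tw (f i) = tw (∑ k ∈ s, f k) ∧ ∀ k ∈ s, tw (f k) ≤ tw (∑ k ∈ s, f k) := by
  classical
  have hsum := rt_sum_eq_sup s f
  have hne' : tw (∑ i ∈ s, f i) ≠ ⊥ := hne
  have hsne : s.Nonempty := by
    rcases s.eq_empty_or_nonempty with h | h
    · exfalso; apply hne'; rw [hsum, h]; rfl
    · exact h
  obtain ⟨i, hi, hieq⟩ := Finset.exists_mem_eq_sup s hsne (fun i => tw (f i))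
  refine ⟨i, hi, by rw [hsum, ← hieq], fun k hk => ?_⟩
  rw [hsum]; exact Finset.le_sup hk

lemma mem_real {N : Set (Fin (n+1) → RT)}
    {S : Finset (Fin (n+1) → RT)} (hSreal : ∀ v ∈ S, ∀ i, v i ≠ (0 : RT))
    (hSgen : TGeneratesOn RT N ↑S) :
    ∀ w ∈ N, w ≠ 0 → ∀ j, w j ≠ (0 : RT) := by
  intro w hw hw0 j hj
  obtain ⟨r, a, xs, hxsS, hrep⟩ := hSgen w hw
  have hwj : w j = ∑ i, a i * xs i j := by
    rw [hrep, sum_apply']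
    exact Finset.sum_congr rfl (fun i _ => rfl)
  have hab : ∀ i, a i = 0 := by
    intro i
    have h1 : tw (a i * xs i j) = ⊥ := by
      have h2 : tw (a i * xs i j) ≤ tw (∑ k, a k * xs k j) := by
        rw [rt_sum_eq_sup]
        exact Finset.le_sup (f := fun i => tw (a i * xs i j)) (Finset.mem_univ i)
      have h3 : tw (∑ k, a k * xs k j) = ⊥ := by rw [← hwj]; exact hj
      rw [h3] at h2; exact le_bot_iff.mp h2
    rw [tw_mul] at h1
    rcases WithBot.add_eq_bot.mp h1 with h | h
    · exact h
    · exact absurd h (hSreal _ (hxsS i) j)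
  apply hw0
  rw [hrep]
  have : ∀ i : Fin r, a i • xs i = (0 : Fin (n+1) → RT) := by
    intro i; rw [hab i]; exact TropModule.zero_smul (xs i)
  simp only [this, Finset.sum_const_zero]

lemma cover {N : Set (Fin (n+1) → RT)}
    {S : Finset (Fin (n+1) → RT)} (hSreal : ∀ v ∈ S, ∀ i, v i ≠ (0 : RT))
    (hSgen : TGeneratesOn RT N ↑S)
    (x : Fin (n+1) → ℝ) (hx : (fun j => rc (x j)) ∈ N) (j0 : Fin (n+1)) :
    ∃ v ∈ S, ∀ j, x j0 - x j ≤ liftR v j0 - liftR v j := by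
  obtain ⟨r, a, xs, hxsS, hrep⟩ := hSgen _ hx
  have hwj : ∀ j, ((x j : ℝ) : WithBot ℝ) = tw (∑ i, a i * xs i j) := by
    intro j
    have h1 : tw (rc (x j)) = tw ((∑ i, a i • xs i) j) := congrArg tw (congrFun hrep j)
    rw [sum_apply'] at h1
    have h2 : (∑ i, (a i • xs i) j) = ∑ i, a i * xs i j :=
      Finset.sum_congr rfl (fun i _ => rfl)
    rw [h2] at h1
    exact h1
  obtain ⟨i0, -, heq, -⟩ := rt_attain Finset.univ (fun i => a i * xs i j0)
    (by intro h; have hh := hwj j0; rw [h] at hh; exact WithBot.coe_ne_bot hh)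
  refine ⟨xs i0, hxsS i0, fun j => ?_⟩
  -- a i0 is real
  have hxreal : ∀ j, tw (xs i0 j) = ((liftR (xs i0) j : ℝ) : WithBot ℝ) :=
    fun j => liftR_spec (hSreal _ (hxsS i0) j)
  have heq' : ((x j0 : ℝ) : WithBot ℝ) = tw (a i0) + ((liftR (xs i0) j0 : ℝ) : WithBot ℝ) := by
    rw [hwj j0, ← heq, tw_mul, hxreal]
  have hane : tw (a i0) ≠ ⊥ := by
    intro h; rw [h, WithBot.bot_add] at heq'; exact WithBot.coe_ne_bot heq'
  rcases WithBot.ne_bot_iff_exists.mp hane with ⟨α, hα⟩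
  have hval : x j0 = α + liftR (xs i0) j0 := by
    rw [← hα, ← WithBot.coe_add] at heq'; exact_mod_cast heq'
  have hle : ∀ j, α + liftR (xs i0) j ≤ x j := by
    intro j
    have h2 : tw (a i0 * xs i0 j) ≤ tw (∑ k, a k * xs k j) := by
      rw [rt_sum_eq_sup]
      exact Finset.le_sup (f := fun k => tw (a k * xs k j)) (Finset.mem_univ i0)
    rw [← hwj j, tw_mul, hxreal, ← hα, ← WithBot.coe_add] at h2
    exact_mod_cast h2
  have := hle j
  linarith [hval, hle j]

end Aux2
noncomputable section Aux3
variable {n : ℕ}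

lemma sum_mem_N {N : Set (Fin (n+1) → RT)} (hsub : IsTSubmodule RT N)
    {ι : Type*} (s : Finset ι) (f : ι → (Fin (n+1) → RT)) (hf : ∀ i ∈ s, f i ∈ N) :
    (∑ i ∈ s, f i) ∈ N := by
  classical
  refine Finset.sum_induction f (· ∈ N) (fun a b ha hb => hsub.add_mem a ha b hb)
    hsub.zero_mem hf

lemma mem_of_criterion {N : Set (Fin (n+1) → RT)} (hsub : IsTSubmodule RT N)
    {S : Finset (Fin (n+1) → RT)} (hSsub : ↑S ⊆ N)
    (hSreal : ∀ v ∈ S, ∀ i, v i ≠ (0 : RT))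
    (z : Fin (n+1) → ℝ)
    (h : ∀ j0, ∃ v ∈ S, ∀ j, z j0 - z j ≤ liftR v j0 - liftR v j) :
    (fun j => rc (z j)) ∈ N := by
  classical
  choose v hvS hvP using h
  set e : Fin (n+1) → (Fin (n+1) → RT) :=
    fun j0 => rc (z j0 - liftR (v j0) j0) • v j0 with he
  have heN : ∀ j0, e j0 ∈ N := fun j0 => hsub.smul_mem _ _ (hSsub (hvS j0))
  have hMN : (∑ j0, e j0) ∈ N := sum_mem_N hsub _ _ (fun j0 _ => heN j0)
  have hreal : ∀ j0 j, tw (v j0 j) = ((liftR (v j0) j : ℝ) : WithBot ℝ) :=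
    fun j0 j => liftR_spec (hSreal _ (hvS j0) j)
  have hev : ∀ j0 j, tw (e j0 j) = ((z j0 - liftR (v j0) j0 + liftR (v j0) j : ℝ) : WithBot ℝ) := by
    intro j0 j
    have : tw (e j0 j) = tw (rc (z j0 - liftR (v j0) j0) * v j0 j) := rfl
    rw [this, tw_mul, hreal, tw_rc, ← WithBot.coe_add]
  have hkey : (∑ j0, e j0) = (fun j => rc (z j)) := by
    funext j
    apply tw_inj
    rw [show tw ((∑ j0, e j0) j) = tw (∑ j0, e j0 j) by rw [sum_apply'], rt_sum_eq_sup]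
    have h1 : (Finset.univ.sup fun j0 => tw (e j0 j)) = ((z j : ℝ) : WithBot ℝ) := by
      apply le_antisymm
      · apply Finset.sup_le
        intro j0 _
        rw [hev j0 j]
        apply WithBot.coe_le_coe.mpr
        have := hvP j0 j
        linarith
      · have hj : tw (e j j) = ((z j : ℝ) : WithBot ℝ) := by
          rw [hev j j]; norm_num
        rw [← hj]
        exact Finset.le_sup (f := fun j0 => tw (e j0 j)) (Finset.mem_univ j)
    rw [h1]; rfl
  rw [← hkey]; exact hMN

end Aux3
noncomputable section Aux4
variable {n : ℕ}

lemma min_sub_max (c A B : ℝ) : min (c - A) (c - B) = c - max A B := by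
  rcases le_total A B with h | h
  · rw [max_eq_right h, min_eq_right (by linarith)]
  · rw [max_eq_left h, min_eq_left (by linarith)]

lemma minfold {N : Set (Fin (n+1) → RT)} (hsub : IsTSubmodule RT N)
    {S : Finset (Fin (n+1) → RT)} (hSsub : ↑S ⊆ N)
    (hSreal : ∀ v ∈ S, ∀ i, v i ≠ (0 : RT))
    (hmin : ∀ v ∈ N, ∀ w ∈ N, (fun i => @min (WithBot ℝ) _ (v i) (w i)) ∈ N)
    (c : ℝ) (j : Fin (n+1)) :
    ∀ (T : Finset (Fin (n+1) → RT)) (hT : T.Nonempty), T ⊆ S →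
      ∃ m ∈ N, ∀ j' : Fin (n+1),
        tw (m j') = ((c - T.sup' hT (fun v => liftR v j - liftR v j') : ℝ) : WithBot ℝ) := by
  intro T hT
  induction hT using Finset.Nonempty.cons_induction with
  | singleton a =>
    intro haS
    have haS' : a ∈ S := haS (Finset.mem_singleton_self a)
    refine ⟨rc (c - liftR a j) • a, hsub.smul_mem _ _ (hSsub haS'), fun j' => ?_⟩
    have h1 : tw ((rc (c - liftR a j) • a) j') = tw (rc (c - liftR a j) * a j') := rfl
    rw [h1, tw_mul, tw_rc, liftR_spec (hSreal a haS' j'), Finset.sup'_singleton,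
      ← WithBot.coe_add]
    exact WithBot.coe_eq_coe.mpr (by ring)
  | cons a T' ha hT' ih =>
    intro hconsS
    have haS : a ∈ S := hconsS (Finset.mem_cons_self a T')
    have hT'S : T' ⊆ S := fun x hx => hconsS (Finset.mem_cons_of_mem hx)
    obtain ⟨m0, hm0N, hm0⟩ := ih hT'S
    have heN : rc (c - liftR a j) • a ∈ N := hsub.smul_mem _ _ (hSsub haS)
    refine ⟨_, hmin _ heN _ hm0N, fun j' => ?_⟩
    have h1 : tw ((fun i => @min (WithBot ℝ) _ ((rc (c - liftR a j) • a) i) (m0 i)) j')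
        = min (tw (rc (c - liftR a j) * a j')) (tw (m0 j')) := rfl
    rw [h1, tw_mul, tw_rc, liftR_spec (hSreal a haS j'), ← WithBot.coe_add, hm0 j',
      ← WithBot.coe_min, Finset.sup'_cons]
    refine WithBot.coe_eq_coe.mpr ?_
    have e1 : c - liftR a j + liftR a j' = c - (liftR a j - liftR a j') := by ring
    rw [e1, min_sub_max]
end Aux4
noncomputable section Aux5
variable {n : ℕ}

lemma forward_convex {N : Set (Fin (n+1) → RT)} (hsub : IsTSubmodule RT N)
    {S : Finset (Fin (n+1) → RT)} (hSsub : ↑S ⊆ N)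
    (hSreal : ∀ v ∈ S, ∀ i, v i ≠ (0 : RT))
    (hSgen : TGeneratesOn RT N ↑S)
    (hmin : ∀ v ∈ N, ∀ w ∈ N, (fun i => @min (WithBot ℝ) _ (v i) (w i)) ∈ N) :
    Convex ℝ {x : Fin (n + 1) → ℝ | (fun i => rc (x i)) ∈ N} := by
  intro x hx y hy a b ha hb hab
  obtain ⟨v0, hv0S, -⟩ := cover hSreal hSgen x hx 0
  have hSne : S.Nonempty := ⟨v0, hv0S⟩
  set z : Fin (n+1) → ℝ := a • x + b • y with hz
  have hzj : ∀ j, z j = a * x j + b * y j := fun j => rfl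
  set Dm : Fin (n+1) → Fin (n+1) → ℝ :=
    fun j j' => S.sup' hSne (fun v => liftR v j - liftR v j') with hDm
  have hDx : ∀ u : Fin (n+1) → ℝ, (fun i => rc (u i)) ∈ N → ∀ j j', u j - u j' ≤ Dm j j' := by
    intro u hu j j'
    obtain ⟨v, hvS, hv⟩ := cover hSreal hSgen u hu j
    exact le_trans (hv j') (Finset.le_sup' (fun v => liftR v j - liftR v j') hvS)
  have hDz : ∀ j j', z j - z j' ≤ Dm j j' := by
    intro j j'
    have h1 := hDx x hx j j'
    have h2 := hDx y hy j j'
    have e1 : z j - z j' = a * (x j - x j') + b * (y j - y j') := by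
      rw [hzj, hzj]; ring
    rw [e1]
    have e2 : a * Dm j j' + b * Dm j j' = Dm j j' := by rw [← add_mul, hab, one_mul]
    linarith [mul_le_mul_of_nonneg_left h1 ha, mul_le_mul_of_nonneg_left h2 hb]
  have hDjj : ∀ j, Dm j j = 0 := by
    intro j
    rw [hDm]
    simp only [sub_self]
    exact Finset.sup'_const hSne 0
  -- for each j, the element with coordinates rc (z j - Dm j j')
  have key : ∀ j : Fin (n+1), ∃ m ∈ N, ∀ j',
      tw (m j') = ((z j - Dm j j' : ℝ) : WithBot ℝ) := by
    intro j
    obtain ⟨m, hmN, hm⟩ := minfold hsub hSsub hSreal hmin (z j) j S hSne (Finset.Subset.refl S)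
    exact ⟨m, hmN, hm⟩
  choose m hmN hmval using key
  have hMN : (∑ j, m j) ∈ N := sum_mem_N hsub _ _ (fun j _ => hmN j)
  have hfin : (∑ j, m j) = (fun j' => rc (z j')) := by
    funext j'
    apply tw_inj
    rw [show tw ((∑ j, m j) j') = tw (∑ j, m j j') by rw [sum_apply'], rt_sum_eq_sup]
    have h1 : (Finset.univ.sup fun j => tw (m j j')) = ((z j' : ℝ) : WithBot ℝ) := by
      apply le_antisymm
      · apply Finset.sup_le
        intro j _
        rw [hmval j j']
        exact WithBot.coe_le_coe.mpr (by linarith [hDz j j'])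
      · have hj : tw (m j' j') = ((z j' : ℝ) : WithBot ℝ) := by
          rw [hmval j' j', hDjj j']; norm_num
        rw [← hj]
        exact Finset.le_sup (f := fun j => tw (m j j')) (Finset.mem_univ j')
    rw [h1]; rfl
  show (fun i => rc ((a • x + b • y) i)) ∈ N
  rw [← hz, ← hfin]
  exact hMN
end Aux5
noncomputable section Aux6
variable {n : ℕ}

lemma gen_mem {N : Set (Fin (n+1) → RT)} (hsub : IsTSubmodule RT N)
    {S : Finset (Fin (n+1) → RT)} (hSsub : ↑S ⊆ N)
    (hSreal : ∀ v ∈ S, ∀ i, v i ≠ (0 : RT))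
    {w : Fin (n+1) → RT} (hwS : w ∈ S) (j0 : Fin (n+1)) :
    (fun j => rc (liftR w j - liftR w j0)) ∈ N := by
  have : (fun j => rc (liftR w j - liftR w j0)) = rc (- liftR w j0) • w := by
    funext j
    apply tw_inj
    have h1 : tw ((rc (- liftR w j0) • w) j) = tw (rc (- liftR w j0) * w j) := rfl
    rw [h1, tw_mul, liftR_spec (hSreal w hwS j)]
    simp only [tw_rc]
    rw [← WithBot.coe_add]
    exact WithBot.coe_eq_coe.mpr (by ring)
  rw [this]
  exact hsub.smul_mem _ _ (hSsub hwS)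

lemma maxlemma {N : Set (Fin (n+1) → RT)} (hsub : IsTSubmodule RT N)
    {S : Finset (Fin (n+1) → RT)} (hSsub : ↑S ⊆ N)
    (hSreal : ∀ v ∈ S, ∀ i, v i ≠ (0 : RT))
    (hSgen : TGeneratesOn RT N ↑S)
    (hconv : Convex ℝ {x : Fin (n + 1) → ℝ | (fun i => rc (x i)) ∈ N})
    (hSne : S.Nonempty) (j0 : Fin (n+1)) :
    ∃ vs ∈ S, ∀ u ∈ S, ∀ j, liftR u j0 - liftR u j ≤ liftR vs j0 - liftR vs j := by
  classical
  set dvec : (Fin (n+1) → RT) → (Fin (n+1) → ℝ) :=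
    fun v j => liftR v j0 - liftR v j with hdvec
  obtain ⟨vs, hvsS, hvsmax⟩ := Set.Finite.exists_maximalFor dvec (↑S : Set _)
    S.finite_toSet (by exact_mod_cast hSne)
  refine ⟨vs, hvsS, fun u huS j => ?_⟩
  -- the two normalized points of Creal
  have hgvs : (fun j => rc (liftR vs j - liftR vs j0)) ∈ N := gen_mem hsub hSsub hSreal hvsS j0
  have hgu : (fun j => rc (liftR u j - liftR u j0)) ∈ N := gen_mem hsub hSsub hSreal huS j0
  -- the covering property along the segment
  have hseg : ∀ k : ℕ, ∃ e ∈ S, ∀ j',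
      (1 - 1/(k+1 : ℝ)) * dvec vs j' + (1/(k+1 : ℝ)) * dvec u j' ≤ dvec e j' := by
    intro k
    set t : ℝ := 1/(k+1 : ℝ) with htdef
    have ht0 : 0 < t := by positivity
    have ht1 : t ≤ 1 := by
      rw [htdef, div_le_one (by positivity)]
      norm_num
    set gs : Fin (n+1) → ℝ := fun j => liftR vs j - liftR vs j0 with hgs
    set gu : Fin (n+1) → ℝ := fun j => liftR u j - liftR u j0 with hgu2
    have hp : ((1 - t) • gs + t • gu) ∈ {x : Fin (n + 1) → ℝ | (fun i => rc (x i)) ∈ N} :=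
      hconv hgvs hgu (by linarith) (le_of_lt ht0) (by ring)
    obtain ⟨e, heS, hecov⟩ := cover hSreal hSgen _ hp j0
    refine ⟨e, heS, fun j' => ?_⟩
    have h1 := hecov j'
    have e0 : ((1 - t) • gs + t • gu) j0 = 0 := by
      show (1-t) * gs j0 + t * gu j0 = 0
      rw [hgs, hgu2]; simp
    have e1 : ((1 - t) • gs + t • gu) j' = -((1-t) * dvec vs j' + t * dvec u j') := by
      show (1-t) * gs j' + t * gu j' = _
      rw [hgs, hgu2, hdvec]; ring
    rw [e0, e1] at h1
    have : liftR e j0 - liftR e j' = dvec e j' := rfl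
    linarith [h1]
  choose E hES hEP using hseg
  have : ∃ es : {v // v ∈ S}, ((fun k => (⟨E k, hES k⟩ : {v // v ∈ S})) ⁻¹' {es}).Infinite := by
    obtain ⟨es, hinf⟩ := Finite.exists_infinite_fiber (fun k => (⟨E k, hES k⟩ : {v // v ∈ S}))
    exact ⟨es, Set.infinite_coe_iff.mp hinf⟩
  obtain ⟨es, hinf⟩ := this
  have hEes : ∀ k ∈ (fun k => (⟨E k, hES k⟩ : {v // v ∈ S})) ⁻¹' {es}, E k = es.1 := by
    intro k hk
    have : (⟨E k, hES k⟩ : {v // v ∈ S}) = es := hk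
    exact congrArg Subtype.val this
  -- Step A : dvec vs ≤ dvec es
  have hA : ∀ j', dvec vs j' ≤ dvec es.1 j' := by
    intro j'
    clear_value dvec
    by_contra hcon
    push_neg at hcon
    set ε : ℝ := dvec vs j' - dvec es.1 j' with hε
    have hε0 : 0 < ε := by linarith
    set C : ℝ := |dvec vs j' - dvec u j'| + 1 with hC
    have hC0 : 0 < C := by positivity
    clear_value ε C
    obtain ⟨k, hkmem, hk⟩ := hinf.exists_gt (Nat.ceil (C / ε))
    have hkP := hEP k j'
    rw [hEes k hkmem] at hkP
    have htk : (1/(k+1:ℝ)) * (dvec vs j' - dvec u j') < ε := by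
      have h1 : (1/(k+1:ℝ)) > 0 := by positivity
      have h2 : dvec vs j' - dvec u j' ≤ C := by
        rw [hC]; have := le_abs_self (dvec vs j' - dvec u j'); linarith
      have h3 : (1/(k+1:ℝ)) * (dvec vs j' - dvec u j') ≤ (1/(k+1:ℝ)) * C :=
        mul_le_mul_of_nonneg_left h2 (le_of_lt h1)
      have h4 : (C / ε) < (k + 1 : ℝ) := by
        calc C / ε ≤ Nat.ceil (C / ε) := Nat.le_ceil _
        _ < (k : ℝ) := by exact_mod_cast hk
        _ < k + 1 := by linarith
      have h5 : (1/(k+1:ℝ)) * C < ε := by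
        rw [div_lt_iff₀ hε0] at h4
        rw [div_mul_eq_mul_div, div_lt_iff₀ (by positivity : (0:ℝ) < k+1)]
        linarith
      linarith
    have e6 : (1 - 1/(k+1:ℝ)) * dvec vs j' + 1/(k+1:ℝ) * dvec u j'
        = dvec vs j' - 1/(k+1:ℝ) * (dvec vs j' - dvec u j') := by ring
    rw [e6] at hkP
    linarith
  have heq : dvec vs = dvec es.1 := le_antisymm (fun j' => hA j') (hvsmax es.2 (by intro j'; exact hA j'))
  -- Step B
  obtain ⟨k0, hk0mem, -⟩ := hinf.exists_gt 0
  have hk0P := hEP k0 j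
  rw [hEes k0 hk0mem, ← heq] at hk0P
  have ht0 : (0:ℝ) < 1/(k0+1:ℝ) := by positivity
  have e2 : (1 - 1/(k0+1:ℝ)) * dvec vs j + 1/(k0+1:ℝ) * dvec u j
      = dvec vs j + 1/(k0+1:ℝ) * (dvec u j - dvec vs j) := by ring
  rw [e2] at hk0P
  show dvec u j ≤ dvec vs j
  by_contra hgt
  push_neg at hgt
  have : 0 < 1/(k0+1:ℝ) * (dvec u j - dvec vs j) := mul_pos ht0 (by linarith)
  linarith

lemma helper_criterion {N : Set (Fin (n+1) → RT)} (hsub : IsTSubmodule RT N)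
    {S : Finset (Fin (n+1) → RT)} (hSsub : ↑S ⊆ N)
    (hSreal : ∀ v ∈ S, ∀ i, v i ≠ (0 : RT))
    (hSgen : TGeneratesOn RT N ↑S)
    (hconv : Convex ℝ {x : Fin (n + 1) → ℝ | (fun i => rc (x i)) ∈ N})
    (x y : Fin (n+1) → ℝ)
    (hx : (fun i => rc (x i)) ∈ N) (hy : (fun i => rc (y i)) ∈ N)
    (j0 : Fin (n+1)) (hxy : x j0 ≤ y j0) :
    ∃ u ∈ S, ∀ j, min (x j0) (y j0) - min (x j) (y j) ≤ liftR u j0 - liftR u j := by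
  obtain ⟨v0, hv0S, -⟩ := cover hSreal hSgen x hx j0
  have hSne : S.Nonempty := ⟨v0, hv0S⟩
  obtain ⟨vs, hvsS, hvsdom⟩ := maxlemma hsub hSsub hSreal hSgen hconv hSne j0
  obtain ⟨va, hvaS, hva⟩ := cover hSreal hSgen x hx j0
  obtain ⟨vb, hvbS, hvb⟩ := cover hSreal hSgen y hy j0
  refine ⟨vs, hvsS, fun j => ?_⟩
  rw [min_eq_left hxy]
  rcases le_total (x j) (y j) with h | h
  · rw [min_eq_left h]
    exact le_trans (hva j) (hvsdom va hvaS j)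
  · rw [min_eq_right h]
    have h1 : y j0 - y j ≤ liftR vs j0 - liftR vs j := le_trans (hvb j) (hvsdom vb hvbS j)
    linarith
end Aux6
noncomputable section Aux7
variable {n : ℕ}

lemma backward_min {N : Set (Fin (n+1) → RT)} (hsub : IsTSubmodule RT N)
    {S : Finset (Fin (n+1) → RT)} (hSsub : ↑S ⊆ N)
    (hSreal : ∀ v ∈ S, ∀ i, v i ≠ (0 : RT))
    (hSgen : TGeneratesOn RT N ↑S)
    (hconv : Convex ℝ {x : Fin (n + 1) → ℝ | (fun i => rc (x i)) ∈ N}) :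
    ∀ v ∈ N, ∀ w ∈ N, (fun i => @min (WithBot ℝ) _ (v i) (w i)) ∈ N := by
  intro v hv w hw
  by_cases hv0 : v = 0
  · have h0 : (fun i => @min (WithBot ℝ) _ (v i) (w i)) = (0 : Fin (n+1) → RT) := by
      funext i; rw [hv0]; exact min_eq_left bot_le
    rw [h0]; exact hsub.zero_mem
  by_cases hw0 : w = 0
  · have h0 : (fun i => @min (WithBot ℝ) _ (v i) (w i)) = (0 : Fin (n+1) → RT) := by
      funext i; rw [hw0]; exact min_eq_right bot_le
    rw [h0]; exact hsub.zero_mem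
  · have hvr := mem_real hSreal hSgen v hv hv0
    have hwr := mem_real hSreal hSgen w hw hw0
    have hveq : v = fun j => rc (liftR v j) := by
      funext j; exact tw_inj (liftR_spec (hvr j))
    have hweq : w = fun j => rc (liftR w j) := by
      funext j; exact tw_inj (liftR_spec (hwr j))
    have hxv : (fun i => rc (liftR v i)) ∈ N := hveq ▸ hv
    have hyw : (fun i => rc (liftR w i)) ∈ N := hweq ▸ hw
    have goal_eq : (fun i => @min (WithBot ℝ) _ (v i) (w i))
        = fun i => rc (min (liftR v i) (liftR w i)) := by
      funext i
      apply tw_inj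
      have h1 : tw (@min (WithBot ℝ) _ (v i) (w i)) = min (tw (v i)) (tw (w i)) := rfl
      rw [h1, liftR_spec (hvr i), liftR_spec (hwr i), ← WithBot.coe_min]
      rfl
    rw [goal_eq]
    apply mem_of_criterion hsub hSsub hSreal
    intro j0
    rcases le_total (liftR v j0) (liftR w j0) with h | h
    · exact helper_criterion hsub hSsub hSreal hSgen hconv _ _ hxv hyw j0 h
    · obtain ⟨u, huS, hu⟩ := helper_criterion hsub hSsub hSreal hSgen hconv _ _ hyw hxv j0 h
      refine ⟨u, huS, fun j => ?_⟩
      rw [min_comm (liftR v j0) (liftR w j0), min_comm (liftR v j) (liftR w j)]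
      exact hu j
end Aux7

theorem stmt17 {n : ℕ} (N : Set (Fin (n + 1) → RT)) (hsub : IsTSubmodule RT N)
    (hfg : ∃ S : Finset (Fin (n + 1) → RT), ↑S ⊆ N ∧ (∀ v ∈ S, ∀ i, v i ≠ (0 : RT)) ∧
      TGeneratesOn RT N ↑S) :
    (∀ v ∈ N, ∀ w ∈ N, (fun i => @min (WithBot ℝ) _ (v i) (w i)) ∈ N) ↔
      ((∀ v ∈ N, v ≠ 0 → ∀ i, v i ≠ (0 : RT)) ∧
        Convex ℝ {x : Fin (n + 1) → ℝ | (fun i => rc (x i)) ∈ N}) := by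
  obtain ⟨S, hSsub, hSreal, hSgen⟩ := hfg
  constructor
  · intro hmin
    exact ⟨mem_real hSreal hSgen, forward_convex hsub hSsub hSreal hSgen hmin⟩
  · rintro ⟨-, hconv⟩
    exact backward_min hsub hSsub hSreal hSgen hconv
end
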